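/- arXiv:1801.02856 — 7 statements merged into one kernel-verified Lean document; each statement's English description precedes it below -/
import Mathlib

section
/- Let a > 0 and p ∈ ℝ be fixed. For every γ > 0 there exist ε > 0 and M > 0 such that the following holds: for every continuous function c : [0,1]×[0,∞) → ℝ with |c(x,t)| < ε for all (x,t), and every twice continuously differentiable function w : [0,1]×[0,∞) → ℝ satisfying ∂²_t w − a² ∂²_x w + c·w = 0 on (0,1)×(0,∞), together with the boundary conditions w(0,t) = p·(∂_t w + a ∂_x w)(0,t) and (∂_t w + a ∂_x w)(1,t) = 0 for all t > 0, one has for all t > 0: (∫_0^1 w(x,t)² dx)^{1/2} ≤ M e^{−γ t} · max{ (∫_0^1 [w(x,0)² + (∂_x w(x,0))²] dx)^{1/2}, (∫_0^1 (∂_t w(x,0))² dx)^{1/2} }. -/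
open MeasureTheory intervalIntegral Set Metric Real

lemma param_hasDerivAt (F F' : ℝ → ℝ → ℝ)
    (hFc : Continuous fun q : ℝ × ℝ => F q.1 q.2)
    (hF'c : Continuous fun q : ℝ × ℝ => F' q.1 q.2)
    (hd : ∀ s x, HasDerivAt (fun r => F r x) (F' s x) s) (t : ℝ) :
    HasDerivAt (fun s => ∫ x in (0:ℝ)..1, F s x) (∫ x in (0:ℝ)..1, F' t x) t := by
  have hK : IsCompact ((Icc (t-1) (t+1)) ×ˢ (Icc (0:ℝ) 1)) :=
    (isCompact_Icc).prod isCompact_Icc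
  obtain ⟨C, hC⟩ := hK.exists_bound_of_continuousOn hF'c.continuousOn
  have cont_slice : ∀ s : ℝ, Continuous (fun x => F s x) := fun s =>
    hFc.comp (continuous_const.prodMk continuous_id)
  have cont_slice' : ∀ s : ℝ, Continuous (fun x => F' s x) := fun s =>
    hF'c.comp (continuous_const.prodMk continuous_id)
  have h := intervalIntegral.hasDerivAt_integral_of_dominated_loc_of_deriv_le
    (F := F) (F' := F') (x₀ := t) (a := 0) (b := 1) (bound := fun _ => C)
    (Metric.ball_mem_nhds t one_pos)
    (Filter.Eventually.of_forall fun s => (cont_slice s).aestronglyMeasurable)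
    ((cont_slice t).intervalIntegrable 0 1)
    ((cont_slice' t).aestronglyMeasurable)
    ?_ (_root_.intervalIntegrable_const (μ := volume) (c := C)) ?_
  · exact h.2
  · refine Filter.Eventually.of_forall fun x hx s hs => ?_
    have hx' : x ∈ Icc (0:ℝ) 1 := by
      have := Set.uIoc_of_le (by norm_num : (0:ℝ) ≤ 1) ▸ hx
      exact ⟨le_of_lt this.1, this.2⟩
    have hs' : s ∈ Icc (t-1) (t+1) := by
      have := mem_ball.mp hs
      constructor <;> [linarith [abs_lt.mp this]; linarith [(abs_lt.mp this).2]]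
    exact hC (s, x) ⟨hs', hx'⟩
  · exact Filter.Eventually.of_forall fun x _ s _ => hd s x

set_option maxHeartbeats 1000000000


/-- Theorem 1 of the paper, for classical solutions.
Let `a > 0` and `p ∈ ℝ`. For every `γ > 0` there exist `ε > 0` and `M > 0` such that:
for every continuous `c` with `|c| < ε` on `[0,1] × [0,∞)` and every `C²` function `w`
solving `∂ₜ²w − a²∂ₓ²w + c·w = 0` on `(0,1) × (0,∞)` with boundary conditions
`w(0,t) = p·(wₜ + a wₓ)(0,t)` and `(wₜ + a wₓ)(1,t) = 0` for `t > 0`, one has, for all `t > 0`,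
`‖w(·,t)‖_{L²} ≤ M e^{−γt} max(‖w(·,0)‖_{H¹}, ‖wₜ(·,0)‖_{L²})`. -/
theorem perturbed_wave_L2_exponential_stability
    (a p : ℝ) (ha : 0 < a) :
    ∀ γ > (0:ℝ), ∃ ε > (0:ℝ), ∃ M > (0:ℝ),
      ∀ c : ℝ → ℝ → ℝ,
        Continuous (fun q : ℝ × ℝ => c q.1 q.2) →
        (∀ x ∈ Set.Icc (0:ℝ) 1, ∀ t ≥ (0:ℝ), |c x t| < ε) →
      ∀ w : ℝ → ℝ → ℝ,
        ContDiff ℝ 2 (fun q : ℝ × ℝ => w q.1 q.2) →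
        -- the perturbed wave equation ∂ₜ²w − a²∂ₓ²w + c·w = 0 on (0,1)×(0,∞)
        (∀ x ∈ Set.Ioo (0:ℝ) 1, ∀ t > (0:ℝ),
          deriv (deriv (w x)) t
            - a ^ 2 * deriv (fun y => deriv (fun z => w z t) y) x
            + c x t * w x t = 0) →
        -- boundary condition at x = 0 : w(0,t) = p (wₜ + a wₓ)(0,t)
        (∀ t > (0:ℝ),
          w 0 t = p * (deriv (w 0) t + a * deriv (fun y => w y t) 0)) →
        -- boundary condition at x = 1 : (wₜ + a wₓ)(1,t) = 0
        (∀ t > (0:ℝ),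
          deriv (w 1) t + a * deriv (fun y => w y t) 1 = 0) →
      ∀ t > (0:ℝ),
        Real.sqrt (∫ x in (0:ℝ)..1, (w x t) ^ 2) ≤
          M * Real.exp (-γ * t) *
            max (Real.sqrt (∫ x in (0:ℝ)..1,
                  ((w x 0) ^ 2 + (deriv (fun y => w y 0) x) ^ 2)))
                (Real.sqrt (∫ x in (0:ℝ)..1, (deriv (w x) 0) ^ 2)) := by
  intro γ hγ
  -- constants
  set μ : ℝ := 8 * γ / a with hμdef
  have hμ : 0 < μ := by positivity
  set A : ℝ := min (1 / (p ^ 2 + 1)) (4 * γ ^ 2) with hAdef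
  have hA : 0 < A := lt_min (by positivity) (by positivity)
  have hA1 : A ≤ 1 := le_trans (min_le_left _ _) (by
    rw [div_le_one (by positivity)]; nlinarith [sq_nonneg p])
  have hAp : A * p ^ 2 ≤ 1 := by
    have h1 : A ≤ 1 / (p ^ 2 + 1) := min_le_left _ _
    have h2 : (0:ℝ) < p ^ 2 + 1 := by positivity
    rw [le_div_iff₀ h2] at h1
    nlinarith [sq_nonneg p]
  have hAγ : A ≤ 4 * γ ^ 2 := min_le_right _ _
  have haμ : a * μ = 8 * γ := by rw [hμdef]; field_simp
  set ε : ℝ := γ * A * Real.exp (-(2 * μ)) with hεdef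
  have hε : 0 < ε := by positivity
  have hεγA : ε * (Real.exp μ * Real.exp μ) = γ * A := by
    have h0 : Real.exp (-(2*μ)) * (Real.exp μ * Real.exp μ) = 1 := by
      rw [← Real.exp_add, ← Real.exp_add, show -(2*μ)+(μ+μ) = 0 by ring, Real.exp_zero]
    calc ε * (Real.exp μ * Real.exp μ)
        = γ * A * (Real.exp (-(2*μ)) * (Real.exp μ * Real.exp μ)) := by rw [hεdef]; ring
      _ = γ * A := by rw [h0, mul_one]
  have hεγ : ε ≤ γ := by
    rw [hεdef]
    calc γ * A * Real.exp (-(2*μ)) ≤ γ * 1 * 1 := by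
          apply mul_le_mul (by nlinarith) (Real.exp_le_one_iff.mpr (by linarith)) (Real.exp_pos _).le (by positivity)
      _ = γ := by ring
  set K : ℝ := (2 + 2 * a ^ 2) * Real.exp μ with hKdef
  have hK : 0 < K := by positivity
  set M : ℝ := Real.sqrt (Real.exp μ / A * (2 * K)) with hMdef
  have hM : 0 < M := Real.sqrt_pos.mpr (by positivity)
  refine ⟨ε, hε, M, hM, ?_⟩
  intro c hc hcε w hw heq hb0 hb1
  -- calculus setup
  set W : ℝ × ℝ → ℝ := fun q => w q.1 q.2 with hWdef
  have hWd : Differentiable ℝ W := hw.differentiable (by norm_num)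
  set F : ℝ × ℝ → (ℝ × ℝ) →L[ℝ] ℝ := fderiv ℝ W with hFdef
  have hF : ContDiff ℝ 1 F := hw.fderiv_right (by norm_num)
  obtain ⟨hFd, hHc⟩ := contDiff_one_iff_fderiv.mp hF
  set H : ℝ × ℝ → (ℝ × ℝ) →L[ℝ] (ℝ × ℝ) →L[ℝ] ℝ := fderiv ℝ F with hHdef
  have hFHas : ∀ q, HasFDerivAt F (H q) q := fun q => (hFd q).hasFDerivAt
  have hsym : ∀ q v v', H q v v' = H q v' v := fun q =>
    second_derivative_symmetric (f := W) (fun y => (hWd y).hasFDerivAt) (hFHas q)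
  have lineT : ∀ x t : ℝ, HasDerivAt (fun s : ℝ => ((x, s) : ℝ × ℝ)) (0, 1) t :=
    fun x t => (hasDerivAt_const t x).prodMk (hasDerivAt_id t)
  have lineX : ∀ x t : ℝ, HasDerivAt (fun y : ℝ => ((y, t) : ℝ × ℝ)) (1, 0) x :=
    fun x t => (hasDerivAt_id x).prodMk (hasDerivAt_const x t)
  have hwt : ∀ x t : ℝ, HasDerivAt (w x) (F (x, t) (0, 1)) t := fun x t =>
    (hWd (x, t)).hasFDerivAt.comp_hasDerivAt t (lineT x t)
  have hwx : ∀ x t : ℝ, HasDerivAt (fun y => w y t) (F (x, t) (1, 0)) x := fun x t =>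
    by have h := (hWd (x, t)).hasFDerivAt.comp_hasDerivAt x (lineX x t); exact h
  have happT : ∀ (v : ℝ × ℝ) (x t : ℝ),
      HasDerivAt (fun s => F (x, s) v) (H (x, t) (0, 1) v) t := by
    intro v x t
    have h1 : HasFDerivAt (fun q => F q v)
        ((ContinuousLinearMap.apply ℝ ℝ v).comp (H (x, t))) (x, t) :=
      (ContinuousLinearMap.apply ℝ ℝ v).hasFDerivAt.comp (x, t) (hFHas (x, t))
    have h2 := h1.comp_hasDerivAt t (lineT x t)
    simp at h2
    exact h2
  have happX : ∀ (v : ℝ × ℝ) (x t : ℝ),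
      HasDerivAt (fun y => F (y, t) v) (H (x, t) (1, 0) v) x := by
    intro v x t
    have h1 : HasFDerivAt (fun q => F q v)
        ((ContinuousLinearMap.apply ℝ ℝ v).comp (H (x, t))) (x, t) :=
      (ContinuousLinearMap.apply ℝ ℝ v).hasFDerivAt.comp (x, t) (hFHas (x, t))
    have h2 := h1.comp_hasDerivAt x (lineX x t)
    simp at h2
    exact h2
  -- u and its derivatives
  set u : ℝ → ℝ → ℝ := fun x t => F (x, t) (0, 1) + a * F (x, t) (1, 0) with hudef
  set ut : ℝ → ℝ → ℝ := fun x t => H (x, t) (0, 1) (0, 1) + a * H (x, t) (0, 1) (1, 0)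
    with hutdef
  set ux : ℝ → ℝ → ℝ := fun x t => H (x, t) (1, 0) (0, 1) + a * H (x, t) (1, 0) (1, 0)
    with huxdef
  have hut : ∀ x t : ℝ, HasDerivAt (fun s => u x s) (ut x t) t := fun x t =>
    (happT (0, 1) x t).add ((happT (1, 0) x t).const_mul a)
  have hux : ∀ x t : ℝ, HasDerivAt (fun y => u y t) (ux x t) x := fun x t =>
    (happX (0, 1) x t).add ((happX (1, 0) x t).const_mul a)
  have hPDE : ∀ x ∈ Set.Ioo (0:ℝ) 1, ∀ t > (0:ℝ),
      H (x, t) (0, 1) (0, 1) - a ^ 2 * H (x, t) (1, 0) (1, 0) + c x t * w x t = 0 := by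
    intro x hx t ht
    have e1 : deriv (w x) = fun s => F (x, s) (0, 1) := funext fun s => (hwt x s).deriv
    have e2 : deriv (deriv (w x)) t = H (x, t) (0, 1) (0, 1) := by
      rw [e1]; exact (happT (0, 1) x t).deriv
    have e3 : (fun y => deriv (fun z => w z t) y) = fun y => F (y, t) (1, 0) :=
      funext fun y => (hwx y t).deriv
    have e4 : deriv (fun y => deriv (fun z => w z t) y) x = H (x, t) (1, 0) (1, 0) := by
      rw [e3]; exact (happX (1, 0) x t).deriv
    have := heq x hx t ht
    rw [e2, e4] at this
    exact this
  have hHvv : ∀ (v v' : ℝ × ℝ), Continuous fun q : ℝ × ℝ => H q v v' := fun v v' =>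
    (hHc.clm_apply continuous_const).clm_apply continuous_const
  have hFv : ∀ v : ℝ × ℝ, Continuous fun q : ℝ × ℝ => F q v := fun v =>
    hF.continuous.clm_apply continuous_const
  have hwc : Continuous W := hw.continuous
  have hu_eq : ∀ t > (0:ℝ), ∀ x ∈ Set.Icc (0:ℝ) 1,
      ut x t = a * ux x t - c x t * w x t := by
    intro t ht
    have key : Set.EqOn (fun x => ut x t) (fun x => a * ux x t - c x t * w x t)
        (Set.Ioo (0:ℝ) 1) := by
      intro x hx
      have hp := hPDE x hx t ht
      have hs := hsym (x, t) (0, 1) (1, 0)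
      show H (x, t) (0, 1) (0, 1) + a * H (x, t) (0, 1) (1, 0)
          = a * (H (x, t) (1, 0) (0, 1) + a * H (x, t) (1, 0) (1, 0)) - c x t * w x t
      linear_combination hp + a * hs
    have cont1 : Continuous fun x => ut x t := by
      simp only [hutdef]
      exact ((hHvv (0,1) (0,1)).comp (continuous_id.prodMk continuous_const)).add
        (continuous_const.mul ((hHvv (0,1) (1,0)).comp (continuous_id.prodMk continuous_const)))
    have cont2 : Continuous fun x => a * ux x t - c x t * w x t := by
      refine Continuous.sub (continuous_const.mul ?_) (Continuous.mul ?_ ?_)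
      · exact ((hHvv (1,0) (0,1)).comp (continuous_id.prodMk continuous_const)).add
          (continuous_const.mul ((hHvv (1,0) (1,0)).comp (continuous_id.prodMk continuous_const)))
      · exact hc.comp (continuous_id.prodMk continuous_const)
      · exact hwc.comp (continuous_id.prodMk continuous_const)
    have hcl := key.closure cont1 cont2
    intro x hx
    apply hcl
    rw [closure_Ioo (by norm_num : (0:ℝ) ≠ 1)]
    exact hx
  have hbc1 : ∀ t > (0:ℝ), u 1 t = 0 := by
    intro t ht
    have := hb1 t ht
    rw [(hwt 1 t).deriv, (hwx 1 t).deriv] at this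
    exact this
  have hbc0 : ∀ t > (0:ℝ), w 0 t = p * u 0 t := by
    intro t ht
    have := hb0 t ht
    rw [(hwt 0 t).deriv, (hwx 0 t).deriv] at this
    exact this
  -- the Lyapunov functional
  set Phi : ℝ → ℝ → ℝ := fun t x =>
    A * Real.exp (-(μ * x)) * (w x t) ^ 2 + Real.exp (μ * x) * (u x t) ^ 2 with hPhidef
  set Phit : ℝ → ℝ → ℝ := fun t x =>
    A * Real.exp (-(μ * x)) * (2 * w x t * F (x, t) (0, 1))
      + Real.exp (μ * x) * (2 * u x t * ut x t) with hPhitdef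
  have hPhid : ∀ s x : ℝ, HasDerivAt (fun r => Phi r x) (Phit s x) s := by
    intro s x
    have h1 : HasDerivAt (fun r => (w x r) ^ 2) (2 * w x s * F (x, s) (0, 1)) s := by
      have := (hwt x s).fun_pow 2
      simp at this
      exact this
    have h2 : HasDerivAt (fun r => (u x r) ^ 2) (2 * u x s * ut x s) s := by
      have := (hut x s).fun_pow 2
      simp at this
      exact this
    exact (h1.const_mul (A * Real.exp (-(μ * x)))).add (h2.const_mul (Real.exp (μ * x)))
  have cswap : Continuous fun q : ℝ × ℝ => ((q.2, q.1) : ℝ × ℝ) :=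
    continuous_snd.prodMk continuous_fst
  have cw2 : Continuous fun q : ℝ × ℝ => w q.2 q.1 := hwc.comp cswap
  have cu2 : Continuous fun q : ℝ × ℝ => u q.2 q.1 := by
    simp only [hudef]
    exact ((hFv (0,1)).comp cswap).add (continuous_const.mul ((hFv (1,0)).comp cswap))
  have cut2 : Continuous fun q : ℝ × ℝ => ut q.2 q.1 := by
    simp only [hutdef]
    exact ((hHvv (0,1) (0,1)).comp cswap).add
      (continuous_const.mul ((hHvv (0,1) (1,0)).comp cswap))
  have cwt2 : Continuous fun q : ℝ × ℝ => F (q.2, q.1) (0, 1) := (hFv (0,1)).comp cswap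
  have cexpm : Continuous fun q : ℝ × ℝ => Real.exp (-(μ * q.2)) :=
    Real.continuous_exp.comp (continuous_const.mul continuous_snd).neg
  have cexpp : Continuous fun q : ℝ × ℝ => Real.exp (μ * q.2) :=
    Real.continuous_exp.comp (continuous_const.mul continuous_snd)
  have cPhi : Continuous fun q : ℝ × ℝ => Phi q.1 q.2 := by
    simp only [hPhidef]
    exact ((continuous_const.mul cexpm).mul (cw2.pow 2)).add (cexpp.mul (cu2.pow 2))
  have cPhit : Continuous fun q : ℝ × ℝ => Phit q.1 q.2 := by
    simp only [hPhitdef]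
    exact ((continuous_const.mul cexpm).mul ((continuous_const.mul cw2).mul cwt2)).add
      (cexpp.mul ((continuous_const.mul cu2).mul cut2))
  set V : ℝ → ℝ := fun t => ∫ x in (0:ℝ)..1, Phi t x with hVdef
  have hV : ∀ s : ℝ, HasDerivAt V (∫ x in (0:ℝ)..1, Phit s x) s := fun s =>
    param_hasDerivAt Phi Phit cPhi cPhit hPhid s
  have hPhinonneg : ∀ s x : ℝ, 0 ≤ Phi s x := by
    intro s x
    have : (0:ℝ) ≤ A * Real.exp (-(μ * x)) * (w x s) ^ 2 + Real.exp (μ * x) * (u x s) ^ 2 := by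
      positivity
    exact this
  have hVnonneg : ∀ s : ℝ, 0 ≤ V s :=
    fun s => intervalIntegral.integral_nonneg (by norm_num) fun x _ => hPhinonneg s x
  -- decay of the Lyapunov functional
  have hVle : ∀ t > (0:ℝ), (∫ x in (0:ℝ)..1, Phit t x) ≤ -(2*γ) * V t := by
    intro t ht
    have cxline : Continuous fun x : ℝ => ((x, t) : ℝ × ℝ) :=
      continuous_id.prodMk continuous_const
    have cwx1 : Continuous fun x => F (x,t) (1,0) := (hFv (1,0)).comp cxline
    have cwt1 : Continuous fun x => F (x,t) (0,1) := (hFv (0,1)).comp cxline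
    have cw1 : Continuous fun x => w x t := hwc.comp cxline
    have cu1 : Continuous fun x => u x t := by
      simp only [hudef]; exact cwt1.add (continuous_const.mul cwx1)
    have cut1 : Continuous fun x => ut x t := by
      simp only [hutdef]
      exact ((hHvv (0,1) (0,1)).comp cxline).add
        (continuous_const.mul ((hHvv (0,1) (1,0)).comp cxline))
    have cux1 : Continuous fun x => ux x t := by
      simp only [huxdef]
      exact ((hHvv (1,0) (0,1)).comp cxline).add
        (continuous_const.mul ((hHvv (1,0) (1,0)).comp cxline))
    have cc1 : Continuous fun x => c x t := hc.comp cxline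
    have cem : Continuous fun x : ℝ => Real.exp (-(μ*x)) :=
      Real.continuous_exp.comp (continuous_const.mul continuous_id).neg
    have cep : Continuous fun x : ℝ => Real.exp (μ*x) :=
      Real.continuous_exp.comp (continuous_const.mul continuous_id)
    set D1 : ℝ → ℝ := fun x => Real.exp (-(μ*x)) * (-μ) * (w x t)^2
      + Real.exp (-(μ*x)) * (2 * w x t * F (x,t) (1,0)) with hD1def
    set D2 : ℝ → ℝ := fun x => Real.exp (μ*x) * μ * (u x t)^2
      + Real.exp (μ*x) * (2 * u x t * ux x t) with hD2def
    set R : ℝ → ℝ := fun x => 2*A*Real.exp (-(μ*x)) * (w x t) * (u x t)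
      - a*A*μ*Real.exp (-(μ*x)) * (w x t)^2 - a*μ*Real.exp (μ*x) * (u x t)^2
      - 2*Real.exp (μ*x) * (c x t) * (u x t) * (w x t) with hRdef
    have hD1d : ∀ x : ℝ, HasDerivAt (fun y => Real.exp (-(μ*y)) * (w y t)^2) (D1 x) x := by
      intro x
      have he : HasDerivAt (fun y : ℝ => Real.exp (-(μ*y))) (Real.exp (-(μ*x)) * (-μ)) x := by
        have h0 : HasDerivAt (fun y : ℝ => -(μ*y)) (-μ) x := by
          simpa using ((hasDerivAt_id x).const_mul μ).fun_neg
        simpa using h0.exp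
      have hs : HasDerivAt (fun y => (w y t)^2) (2 * w x t * F (x,t) (1,0)) x := by
        have h3 := (hwx x t).fun_pow 2
        simp at h3
        exact h3
      exact he.mul hs
    have hD2d : ∀ x : ℝ, HasDerivAt (fun y => Real.exp (μ*y) * (u y t)^2) (D2 x) x := by
      intro x
      have he : HasDerivAt (fun y : ℝ => Real.exp (μ*y)) (Real.exp (μ*x) * μ) x := by
        have h0 : HasDerivAt (fun y : ℝ => μ*y) μ x := by
          simpa using (hasDerivAt_id x).const_mul μ
        simpa using h0.exp
      have hs : HasDerivAt (fun y => (u y t)^2) (2 * u x t * ux x t) x := by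
        have h3 := (hux x t).fun_pow 2
        simp at h3
        exact h3
      exact he.mul hs
    have hD1int : IntervalIntegrable D1 volume 0 1 := by
      apply Continuous.intervalIntegrable
      simp only [hD1def]
      exact ((cem.mul continuous_const).mul (cw1.pow 2)).add
        (cem.mul ((continuous_const.mul cw1).mul cwx1))
    have hD2int : IntervalIntegrable D2 volume 0 1 := by
      apply Continuous.intervalIntegrable
      simp only [hD2def]
      exact ((cep.mul continuous_const).mul (cu1.pow 2)).add
        (cep.mul ((continuous_const.mul cu1).mul cux1))
    have hRint : IntervalIntegrable R volume 0 1 := by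
      apply Continuous.intervalIntegrable
      simp only [hRdef]
      exact ((((continuous_const.mul cem).mul cw1).mul cu1).sub
        ((continuous_const.mul cem).mul (cw1.pow 2))).sub
        ((continuous_const.mul cep).mul (cu1.pow 2)) |>.sub
        (((continuous_const.mul cep).mul cc1).mul cu1 |>.mul cw1)
    have hPhiint : IntervalIntegrable (fun x => Phi t x) volume 0 1 :=
      (cPhi.comp (continuous_const.prodMk continuous_id)).intervalIntegrable 0 1
    have hFTC1 : (∫ x in (0:ℝ)..1, D1 x)
        = Real.exp (-(μ*1)) * (w 1 t)^2 - Real.exp (-(μ*0)) * (w 0 t)^2 := by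
      have h := intervalIntegral.integral_eq_sub_of_hasDerivAt
        (f := fun y => Real.exp (-(μ*y)) * (w y t)^2) (f' := D1)
        (fun x _ => hD1d x) hD1int
      simpa using h
    have hFTC2 : (∫ x in (0:ℝ)..1, D2 x)
        = Real.exp (μ*1) * (u 1 t)^2 - Real.exp (μ*0) * (u 0 t)^2 := by
      have h := intervalIntegral.integral_eq_sub_of_hasDerivAt
        (f := fun y => Real.exp (μ*y) * (u y t)^2) (f' := D2)
        (fun x _ => hD2d x) hD2int
      simpa using h
    have hsplitEq : Set.EqOn (fun x => Phit t x)
        (fun x => R x - (a*A) * D1 x + a * D2 x) (Set.uIcc 0 1) := by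
      intro x hx
      have hx' : x ∈ Set.Icc (0:ℝ) 1 := by rwa [Set.uIcc_of_le (by norm_num)] at hx
      have e1 : F (x,t) (0,1) = u x t - a * F (x,t) (1,0) := by
        show F (x,t) (0,1) = (F (x, t) (0, 1) + a * F (x, t) (1, 0)) - a * F (x,t) (1,0)
        ring
      have e2 := hu_eq t ht x hx'
      show Phit t x = R x - (a*A) * D1 x + a * D2 x
      simp only [hPhitdef, hRdef, hD1def, hD2def]
      linear_combination (2 * Real.exp (-(μ*x)) * A * w x t) * e1
        + (2 * Real.exp (μ*x) * u x t) * e2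
    have hIsplit : (∫ x in (0:ℝ)..1, Phit t x)
        = (∫ x in (0:ℝ)..1, R x) - (a*A) * (∫ x in (0:ℝ)..1, D1 x)
          + a * (∫ x in (0:ℝ)..1, D2 x) := by
      rw [intervalIntegral.integral_congr hsplitEq,
        intervalIntegral.integral_add ((hRint.sub (hD1int.const_mul (a*A))))
          (hD2int.const_mul a),
        intervalIntegral.integral_sub hRint (hD1int.const_mul (a*A)),
        intervalIntegral.integral_const_mul, intervalIntegral.integral_const_mul]
    have hRle : ∀ x ∈ Set.Icc (0:ℝ) 1, R x ≤ -(2*γ) * Phi t x := by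
      intro x hx
      have f1 : 0 < Real.exp (-(μ*x)) := Real.exp_pos _
      have f2 : 0 < Real.exp (μ*x) := Real.exp_pos _
      have f3 : Real.exp (-(μ*x)) * Real.exp (μ*x) = 1 := by
        rw [← Real.exp_add]; simp
      have f4 : Real.exp (μ*x) ≤ Real.exp μ :=
        Real.exp_le_exp.mpr (by nlinarith [hx.2, hμ])
      have f5 : Real.exp (-(μ*x)) ≤ Real.exp (μ*x) :=
        Real.exp_le_exp.mpr (by nlinarith [hx.1, hμ])
      have hcb := hcε x hx t ht.le
      have hc1 : c x t ≤ ε := le_of_lt (abs_lt.mp hcb).2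
      have hc2 : -ε ≤ c x t := le_of_lt (abs_lt.mp hcb).1
      have step1 : 2*A*Real.exp (-(μ*x))*(w x t)*(u x t)
          ≤ 2*γ*A*Real.exp (-(μ*x))*(w x t)^2 + 2*γ*Real.exp (μ*x)*(u x t)^2 := by
        have h0 : 0 ≤ A * (Real.exp (-(μ*x)) * (2*γ*(w x t) - u x t)^2) := by
          positivity
        have m1 : 0 ≤ (4*γ^2 - A) * (Real.exp (-(μ*x)) * (u x t)^2) :=
          mul_nonneg (by linarith) (by positivity)
        have m2 : 0 ≤ (4*γ^2) * ((Real.exp (μ*x) - Real.exp (-(μ*x))) * (u x t)^2) :=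
          mul_nonneg (by positivity) (mul_nonneg (by linarith) (sq_nonneg _))
        have hs : 2*γ * (2*A*Real.exp (-(μ*x))*(w x t)*(u x t))
            ≤ 2*γ * (2*γ*A*Real.exp (-(μ*x))*(w x t)^2 + 2*γ*Real.exp (μ*x)*(u x t)^2) := by
          linarith [h0, m1, m2]
        exact (mul_le_mul_iff_right₀ (by positivity : (0:ℝ) < 2*γ)).mp hs
      have m4 : ε * Real.exp (μ*x) ≤ γ * A * Real.exp (-(μ*x)) := by
        have f3' : ε * Real.exp (μ*x)
            = ε * (Real.exp (μ*x) * Real.exp (μ*x)) * Real.exp (-(μ*x)) := by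
          rw [show ε * (Real.exp (μ*x) * Real.exp (μ*x)) * Real.exp (-(μ*x))
              = ε * Real.exp (μ*x) * (Real.exp (-(μ*x)) * Real.exp (μ*x)) by ring, f3,
            mul_one]
        rw [f3', ← hεγA]
        have hee : Real.exp (μ*x) * Real.exp (μ*x) ≤ Real.exp μ * Real.exp μ :=
          mul_le_mul f4 f4 f2.le (Real.exp_pos μ).le
        nlinarith [mul_le_mul_of_nonneg_right
          (mul_le_mul_of_nonneg_left hee hε.le) f1.le]
      have step2 : -(2*Real.exp (μ*x)*(c x t)*(u x t)*(w x t))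
          ≤ γ*A*Real.exp (-(μ*x))*(w x t)^2 + γ*Real.exp (μ*x)*(u x t)^2 := by
        have e1 : 0 ≤ Real.exp (μ*x) * ((ε + c x t) * (u x t + w x t)^2) :=
          mul_nonneg f2.le (mul_nonneg (by linarith) (sq_nonneg _))
        have e2 : 0 ≤ Real.exp (μ*x) * ((ε - c x t) * (u x t - w x t)^2) :=
          mul_nonneg f2.le (mul_nonneg (by linarith) (sq_nonneg _))
        have m3 : 0 ≤ (γ - ε) * (Real.exp (μ*x) * (u x t)^2) :=
          mul_nonneg (by linarith [hεγ]) (by positivity)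
        have m4' : 0 ≤ (γ*A*Real.exp (-(μ*x)) - ε*Real.exp (μ*x)) * (w x t)^2 :=
          mul_nonneg (by linarith [m4]) (sq_nonneg _)
        linarith [e1, e2, m3, m4']
      have hq1 : a*μ*(A*Real.exp (-(μ*x))*(w x t)^2)
          = 8*γ*(A*Real.exp (-(μ*x))*(w x t)^2) := by rw [haμ]
      have hq2 : a*μ*(Real.exp (μ*x)*(u x t)^2)
          = 8*γ*(Real.exp (μ*x)*(u x t)^2) := by rw [haμ]
      have m5 : 0 ≤ γ*(A*Real.exp (-(μ*x))*(w x t)^2) := by positivity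
      have m6 : 0 ≤ γ*(Real.exp (μ*x)*(u x t)^2) := by positivity
      show R x ≤ -(2*γ) * Phi t x
      simp only [hRdef, hPhidef]
      linarith [step1, step2, hq1, hq2, m5, m6]
    have hbt : -(a*A) * (∫ x in (0:ℝ)..1, D1 x) + a * (∫ x in (0:ℝ)..1, D2 x) ≤ 0 := by
      rw [hFTC1, hFTC2, hbc1 t ht, hbc0 t ht]
      norm_num
      have h1 : (0:ℝ) ≤ a * A * (Real.exp (-μ) * (w 1 t)^2) := by positivity
      have h2 : A * p^2 * (a * (u 0 t)^2) ≤ 1 * (a * (u 0 t)^2) :=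
        mul_le_mul_of_nonneg_right hAp (by positivity)
      nlinarith [h1, h2]
    have hmono := intervalIntegral.integral_mono_on (by norm_num : (0:ℝ) ≤ 1)
      hRint (hPhiint.const_mul (-(2*γ))) (fun x hx => hRle x hx)
    have : (∫ x in (0:ℝ)..1, -(2*γ) * Phi t x) = -(2*γ) * V t := by
      rw [intervalIntegral.integral_const_mul]
    linarith [hIsplit, hmono, hbt, this.le, this.ge]
  -- Gronwall
  have hgmono : AntitoneOn (fun s => V s * Real.exp (2*γ*s)) (Set.Ici (0:ℝ)) := by
    have hgd : ∀ s : ℝ, HasDerivAt (fun r => V r * Real.exp (2*γ*r))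
        ((∫ x in (0:ℝ)..1, Phit s x) * Real.exp (2*γ*s)
          + V s * (Real.exp (2*γ*s) * (2*γ))) s := by
      intro s
      have he : HasDerivAt (fun r : ℝ => Real.exp (2*γ*r)) (Real.exp (2*γ*s) * (2*γ)) s := by
        have h0 : HasDerivAt (fun r : ℝ => 2*γ*r) (2*γ) s := by
          simpa using (hasDerivAt_id s).const_mul (2*γ)
        simpa using h0.exp
      exact (hV s).mul he
    apply antitoneOn_of_deriv_nonpos (convex_Ici 0)
    · exact fun s _ => (hgd s).continuousAt.continuousWithinAt
    · intro s hs
      exact (hgd s).differentiableAt.differentiableWithinAt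
    · intro s hs
      rw [interior_Ici] at hs
      rw [(hgd s).deriv]
      have h1 := hVle s hs
      have h2 := hVnonneg s
      have h3 := mul_le_mul_of_nonneg_right h1 (Real.exp_pos (2*γ*s)).le
      have h4 : (-(2*γ) * V s) * Real.exp (2*γ*s) = -(V s * (Real.exp (2*γ*s) * (2*γ))) := by
        ring
      linarith [h3, h4.le, h4.ge]
  have hVdecay : ∀ t ≥ (0:ℝ), V t ≤ V 0 * Real.exp (-(2*γ*t)) := by
    intro t ht0
    have hg := hgmono (Set.self_mem_Ici) ht0 ht0
    have hgt : V t * Real.exp (2*γ*t) ≤ V 0 := by simpa using hg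
    calc V t = (V t * Real.exp (2*γ*t)) * Real.exp (-(2*γ*t)) := by
          rw [mul_assoc, show Real.exp (2*γ*t) * Real.exp (-(2*γ*t)) = 1 from by
            rw [← Real.exp_add]; simp, mul_one]
      _ ≤ V 0 * Real.exp (-(2*γ*t)) :=
          mul_le_mul_of_nonneg_right hgt (Real.exp_pos _).le
  -- final assembly
  intro t ht
  have hder0x : (fun x => (w x 0)^2 + (deriv (fun y => w y 0) x)^2)
      = fun x => (w x 0)^2 + (F (x,0) (1,0))^2 := funext fun x => by rw [(hwx x 0).deriv]
  have hder0t : (fun x => (deriv (w x) 0)^2) = fun x => (F (x,0) (0,1))^2 :=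
    funext fun x => by rw [(hwt x 0).deriv]
  rw [hder0x, hder0t]
  have cxline0 : Continuous fun x : ℝ => ((x,(0:ℝ)) : ℝ × ℝ) :=
    continuous_id.prodMk continuous_const
  have cxlinet : Continuous fun x : ℝ => ((x,t) : ℝ × ℝ) :=
    continuous_id.prodMk continuous_const
  have cI1 : Continuous fun x => (w x 0)^2 + (F (x,0) (1,0))^2 :=
    ((hwc.comp cxline0).pow 2).add (((hFv (1,0)).comp cxline0).pow 2)
  have cI2 : Continuous fun x => (F (x,0) (0,1))^2 := ((hFv (0,1)).comp cxline0).pow 2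
  set I1 : ℝ := ∫ x in (0:ℝ)..1, ((w x 0)^2 + (F (x,0) (1,0))^2) with hI1def
  set I2 : ℝ := ∫ x in (0:ℝ)..1, (F (x,0) (0,1))^2 with hI2def
  have hI1nn : 0 ≤ I1 :=
    intervalIntegral.integral_nonneg (by norm_num) fun x _ => by positivity
  have hI2nn : 0 ≤ I2 :=
    intervalIntegral.integral_nonneg (by norm_num) fun x _ => by positivity
  set S : ℝ := max (Real.sqrt I1) (Real.sqrt I2) with hSdef
  have hSnn : 0 ≤ S := le_trans (Real.sqrt_nonneg I1) (le_max_left _ _)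
  have hI1S : I1 ≤ S^2 := by
    rw [← Real.sq_sqrt hI1nn]
    exact pow_le_pow_left₀ (Real.sqrt_nonneg _) (le_max_left _ _) 2
  have hI2S : I2 ≤ S^2 := by
    rw [← Real.sq_sqrt hI2nn]
    exact pow_le_pow_left₀ (Real.sqrt_nonneg _) (le_max_right _ _) 2
  have hexpμ1 : (1:ℝ) ≤ Real.exp μ := Real.one_le_exp hμ.le
  -- bound V 0
  have hptwise0 : ∀ x ∈ Set.Icc (0:ℝ) 1,
      Phi 0 x ≤ K * (((w x 0)^2 + (F (x,0) (1,0))^2) + (F (x,0) (0,1))^2) := by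
    intro x hx
    have f1 : Real.exp (-(μ*x)) ≤ 1 := Real.exp_le_one_iff.mpr (by nlinarith [hx.1, hμ])
    have f2 : Real.exp (μ*x) ≤ Real.exp μ := Real.exp_le_exp.mpr (by nlinarith [hx.2, hμ])
    have term1 : A * Real.exp (-(μ*x)) ≤ 1 := mul_le_one₀ hA1 (Real.exp_pos _).le f1
    have t1 : A * Real.exp (-(μ*x)) * (w x 0)^2 ≤ 1 * (w x 0)^2 :=
      mul_le_mul_of_nonneg_right term1 (sq_nonneg _)
    have q1 : (F (x,0) (0,1) + a * F (x,0) (1,0))^2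
        ≤ 2*(F (x,0) (0,1))^2 + 2*a^2*(F (x,0) (1,0))^2 := by
      nlinarith [sq_nonneg (F (x,0) (0,1) - a * F (x,0) (1,0))]
    have t2 : Real.exp (μ*x) * (F (x,0) (0,1) + a * F (x,0) (1,0))^2
        ≤ Real.exp μ * (2*(F (x,0) (0,1))^2 + 2*a^2*(F (x,0) (1,0))^2) :=
      mul_le_mul f2 q1 (sq_nonneg _) (Real.exp_pos μ).le
    have hint1 : (0:ℝ) ≤ ((2+2*a^2)*Real.exp μ - 1) * (w x 0)^2 :=
      mul_nonneg (by nlinarith [hexpμ1, sq_nonneg a]) (sq_nonneg _)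
    have hint2 : (0:ℝ) ≤ (2*a^2*Real.exp μ) * (F (x,0) (0,1))^2 := by positivity
    have hint3 : (0:ℝ) ≤ (2*Real.exp μ) * (F (x,0) (1,0))^2 := by positivity
    show Phi 0 x ≤ _
    simp only [hPhidef, hKdef, hudef]
    linarith [t1, t2, hint1, hint2, hint3]
  have hPhiint0 : IntervalIntegrable (fun x => Phi 0 x) volume 0 1 :=
    (cPhi.comp (continuous_const.prodMk continuous_id)).intervalIntegrable 0 1
  have hV0le : V 0 ≤ K * (I1 + I2) := by
    have hle := intervalIntegral.integral_mono_on (by norm_num : (0:ℝ) ≤ 1)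
      hPhiint0 ((continuous_const.mul (cI1.add cI2)).intervalIntegrable 0 1) (fun x hx => by
        have := hptwise0 x hx
        simpa using this)
    have heq2 : (∫ x in (0:ℝ)..1,
        K * (((w x 0)^2 + (F (x,0) (1,0))^2) + (F (x,0) (0,1))^2)) = K * (I1 + I2) := by
      rw [intervalIntegral.integral_const_mul,
        intervalIntegral.integral_add (cI1.intervalIntegrable 0 1) (cI2.intervalIntegrable 0 1)]
    calc V 0 ≤ _ := hle
      _ = K * (I1 + I2) := heq2
  -- bound the L² norm at time t by V t
  have hfin : A * (∫ x in (0:ℝ)..1, (w x t)^2) ≤ Real.exp μ * V t := by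
    have hpt : ∀ x ∈ Set.Icc (0:ℝ) 1, A * (w x t)^2 ≤ Real.exp μ * Phi t x := by
      intro x hx
      have hprod : (1:ℝ) ≤ Real.exp μ * Real.exp (-(μ*x)) := by
        rw [← Real.exp_add]
        apply Real.one_le_exp
        nlinarith [hx.2, hμ]
      have h1 : A * (w x t)^2 * 1 ≤ A * (w x t)^2 * (Real.exp μ * Real.exp (-(μ*x))) :=
        mul_le_mul_of_nonneg_left hprod (by positivity)
      have h2 : (0:ℝ) ≤ Real.exp μ * (Real.exp (μ*x) * (u x t)^2) := by positivity
      show A * (w x t)^2 ≤ Real.exp μ * Phi t x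
      simp only [hPhidef]
      nlinarith [h1, h2]
    have hw2int : IntervalIntegrable (fun x => A * (w x t)^2) volume 0 1 :=
      (continuous_const.mul (((hwc.comp cxlinet)).pow 2)).intervalIntegrable 0 1
    have hPhitint2 : IntervalIntegrable (fun x => Real.exp μ * Phi t x) volume 0 1 :=
      (continuous_const.mul
        (cPhi.comp (continuous_const.prodMk continuous_id))).intervalIntegrable 0 1
    have hle := intervalIntegral.integral_mono_on (by norm_num : (0:ℝ) ≤ 1)
      hw2int hPhitint2 hpt
    rwa [intervalIntegral.integral_const_mul, intervalIntegral.integral_const_mul] at hle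
  -- numeric assembly
  have hM2A : M^2 * A = Real.exp μ * (2*K) := by
    rw [hMdef, Real.sq_sqrt (by positivity)]
    field_simp
  have hexpsq : Real.exp (-γ*t) * Real.exp (-γ*t) = Real.exp (-(2*γ*t)) := by
    rw [← Real.exp_add]; ring_nf
  have c1 : Real.exp μ * V t ≤ Real.exp μ * (V 0 * Real.exp (-(2*γ*t))) :=
    mul_le_mul_of_nonneg_left (hVdecay t ht.le) (Real.exp_pos μ).le
  have c2 : Real.exp μ * (V 0 * Real.exp (-(2*γ*t)))
      ≤ Real.exp μ * ((K * (I1 + I2)) * Real.exp (-(2*γ*t))) :=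
    mul_le_mul_of_nonneg_left
      (mul_le_mul_of_nonneg_right hV0le (Real.exp_pos _).le) (Real.exp_pos μ).le
  have c3 : I1 + I2 ≤ 2 * S^2 := by linarith [hI1S, hI2S]
  have c4 : Real.exp μ * ((K * (I1 + I2)) * Real.exp (-(2*γ*t)))
      ≤ Real.exp μ * ((K * (2 * S^2)) * Real.exp (-(2*γ*t))) :=
    mul_le_mul_of_nonneg_left
      (mul_le_mul_of_nonneg_right
        (mul_le_mul_of_nonneg_left c3 hK.le) (Real.exp_pos _).le) (Real.exp_pos μ).le
  have c5 : Real.exp μ * ((K * (2 * S^2)) * Real.exp (-(2*γ*t)))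
      = A * ((M * Real.exp (-γ*t) * S)^2) := by
    have hrw : (M * Real.exp (-γ*t) * S)^2
        = M^2 * (Real.exp (-γ*t) * Real.exp (-γ*t)) * S^2 := by ring
    rw [hrw, hexpsq]
    linear_combination (-(Real.exp (-(2*γ*t)) * S^2)) * hM2A
  have hbig : A * (∫ x in (0:ℝ)..1, (w x t)^2) ≤ A * ((M * Real.exp (-γ*t) * S)^2) := by
    linarith [hfin, c1, c2, c4, c5.le, c5.ge]
  have hw2 : (∫ x in (0:ℝ)..1, (w x t)^2) ≤ (M * Real.exp (-γ*t) * S)^2 :=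
    le_of_mul_le_mul_left hbig hA
  have hsq := Real.sqrt_le_sqrt hw2
  rwa [Real.sqrt_sq (by positivity)] at hsq
end

section
/- Let a > 0 and let w : [0,1]×[0,∞) → ℝ be twice continuously differentiable, satisfying the wave equation ∂²_t w − a² ∂²_x w = 0 on (0,1)×(0,∞), together with the boundary conditions w(0,t) = 0 and (∂_t w + a ∂_x w)(1,t) = 0 for all t > 0. Then w(x,t) = 0 for every x ∈ [0,1] and every t > 2/a. -/
set_option maxHeartbeats 1000000

open Set

section AuxWave

variable {E : Type*} [NormedAddCommGroup E] [NormedSpace ℝ E]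

/-- Derivative of a differentiable function along a straight line. -/
lemma line_hasDerivAt (g : ℝ × ℝ → E) (hg : Differentiable ℝ g) (p v : ℝ × ℝ) (s : ℝ) :
    HasDerivAt (fun s : ℝ => g (p + s • v)) (fderiv ℝ g (p + s • v) v) s := by
  have h1 : HasDerivAt (fun s : ℝ => p + s • v) v s := by
    simpa using ((hasDerivAt_id s).smul_const v).const_add p
  exact ((hg (p + s • v)).hasFDerivAt.comp_hasDerivAt s h1)

end AuxWave

/-- the paper's introductory superstability example.
Any `C²` solution of the wave equation `∂ₜ²w = a²∂ₓ²w` on `(0,1) × (0,∞)` with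
boundary conditions `w(0,t) = 0` and `(wₜ + a wₓ)(1,t) = 0` for `t > 0` vanishes
identically for `t > 2/a`. -/
theorem wave_dirichlet_finite_time_extinction
    (a : ℝ) (ha : 0 < a) (w : ℝ → ℝ → ℝ)
    (hw : ContDiff ℝ 2 (fun q : ℝ × ℝ => w q.1 q.2))
    -- the wave equation ∂ₜ²w − a²∂ₓ²w = 0 on (0,1)×(0,∞)
    (hpde : ∀ x ∈ Set.Ioo (0:ℝ) 1, ∀ t > (0:ℝ),
      deriv (deriv (w x)) t
        - a ^ 2 * deriv (fun y => deriv (fun z => w z t) y) x = 0)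
    -- boundary condition at x = 0 : w(0,t) = 0
    (hbc0 : ∀ t > (0:ℝ), w 0 t = 0)
    -- boundary condition at x = 1 : (wₜ + a wₓ)(1,t) = 0
    (hbc1 : ∀ t > (0:ℝ), deriv (w 1) t + a * deriv (fun y => w y t) 1 = 0) :
    ∀ x ∈ Set.Icc (0:ℝ) 1, ∀ t > 2 / a, w x t = 0 := by
  obtain ⟨W, hW⟩ : ∃ W : ℝ × ℝ → ℝ, W = fun q => w q.1 q.2 := ⟨_, rfl⟩
  have hwW : ContDiff ℝ 2 W := hW ▸ hw
  have hWd : Differentiable ℝ W := hwW.differentiable (by norm_num)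
  obtain ⟨f, hfdef⟩ : ∃ f : ℝ × ℝ → (ℝ × ℝ →L[ℝ] ℝ), f = fderiv ℝ W := ⟨_, rfl⟩
  have hf : ContDiff ℝ 1 f := hfdef ▸ hwW.fderiv_right (by norm_num)
  have hfd : Differentiable ℝ f := hf.differentiable (by norm_num)
  obtain ⟨F, hFdef⟩ : ∃ F : ℝ × ℝ → (ℝ × ℝ →L[ℝ] (ℝ × ℝ →L[ℝ] ℝ)), F = fderiv ℝ f :=
    ⟨_, rfl⟩
  -- first partial derivatives
  have hdt : ∀ x t : ℝ, HasDerivAt (fun s => w x s) (f (x, t) (0, 1)) t := by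
    intro x t
    have h := line_hasDerivAt W hWd (x, 0) (0, 1) t
    rw [← hfdef] at h
    simp only [Prod.smul_mk, smul_eq_mul, mul_zero, mul_one, Prod.mk_add_mk, add_zero,
      zero_add, hW] at h
    exact h
  have hdx : ∀ x t : ℝ, HasDerivAt (fun y => w y t) (f (x, t) (1, 0)) x := by
    intro x t
    have h := line_hasDerivAt W hWd (0, t) (1, 0) x
    rw [← hfdef] at h
    simp only [Prod.smul_mk, smul_eq_mul, mul_zero, mul_one, Prod.mk_add_mk, add_zero,
      zero_add, hW] at h
    exact h
  -- derivative of `f` evaluated at a fixed vector, along a line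
  have hDf : ∀ (p dvec v : ℝ × ℝ) (s : ℝ),
      HasDerivAt (fun s : ℝ => f (p + s • dvec) v) (F (p + s • dvec) dvec v) s := by
    intro p dvec v s
    have h := line_hasDerivAt f hfd p dvec s
    rw [← hFdef] at h
    have h2 := ((ContinuousLinearMap.apply ℝ ℝ v).hasFDerivAt.comp_hasDerivAt s h)
    exact h2
  -- second partial derivatives
  have hddt : ∀ x t : ℝ, deriv (deriv (w x)) t = F (x, t) (0, 1) (0, 1) := by
    intro x t
    have h1 : deriv (w x) = fun s => f (x, s) (0, 1) := funext fun s => (hdt x s).deriv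
    rw [h1]
    have h := hDf (x, 0) (0, 1) (0, 1) t
    simp only [Prod.smul_mk, smul_eq_mul, mul_zero, mul_one, Prod.mk_add_mk, add_zero,
      zero_add] at h
    exact h.deriv
  have hddx : ∀ x t : ℝ, deriv (fun y => deriv (fun z => w z t) y) x
      = F (x, t) (1, 0) (1, 0) := by
    intro x t
    have h1 : (fun y => deriv (fun z => w z t) y) = fun y => f (y, t) (1, 0) :=
      funext fun y => (hdx y t).deriv
    rw [h1]
    have h := hDf (0, t) (1, 0) (1, 0) x
    simp only [Prod.smul_mk, smul_eq_mul, mul_zero, mul_one, Prod.mk_add_mk, add_zero,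
      zero_add] at h
    exact h.deriv
  -- symmetry of the second derivative
  have hsymm : ∀ p : ℝ × ℝ, F p (1, 0) (0, 1) = F p (0, 1) (1, 0) := by
    intro p
    have h := (hwW.contDiffAt (x := p)).isSymmSndFDerivAt (by norm_num)
      ((1:ℝ), (0:ℝ)) ((0:ℝ), (1:ℝ))
    rw [← hfdef, ← hFdef] at h
    exact h
  -- the wave equation in terms of `F`
  have hPDE : ∀ p : ℝ × ℝ, p.1 ∈ Ioo (0:ℝ) 1 → 0 < p.2 →
      F p (0, 1) (0, 1) = a ^ 2 * F p (1, 0) (1, 0) := by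
    intro p hp1 hp2
    have h := hpde p.1 hp1 p.2 hp2
    rw [hddt, hddx] at h
    linarith
  -- decomposition of vectors
  have hvec : ∀ b c : ℝ, ((b, c) : ℝ × ℝ) = b • ((1:ℝ), (0:ℝ)) + c • ((0:ℝ), (1:ℝ)) := by
    intro b c; simp [Prod.ext_iff]
  have hfexp : ∀ (p : ℝ × ℝ) (b c : ℝ),
      f p (b, c) = b * f p (1, 0) + c * f p (0, 1) := by
    intro p b c
    rw [hvec b c, map_add, map_smul, map_smul, smul_eq_mul, smul_eq_mul]
  have hFexp : ∀ (p v : ℝ × ℝ) (b c : ℝ),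
      F p (b, c) v = b * F p (1, 0) v + c * F p (0, 1) v := by
    intro p v b c
    rw [hvec b c, map_add, map_smul, map_smul, ContinuousLinearMap.add_apply,
      ContinuousLinearMap.smul_apply, ContinuousLinearMap.smul_apply, smul_eq_mul,
      smul_eq_mul]
  -- the Riemann invariant `u = w_t + a w_x`
  obtain ⟨u, hu⟩ : ∃ u : ℝ × ℝ → ℝ, u = fun p => f p (0, 1) + a * f p (1, 0) := ⟨_, rfl⟩
  have huapp : ∀ p : ℝ × ℝ, u p = f p (0, 1) + a * f p (1, 0) := fun p => by rw [hu]
  have hu1 : ∀ t > (0:ℝ), u (1, t) = 0 := by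
    intro t ht
    have h := hbc1 t ht
    rw [(hdt 1 t).deriv, (hdx 1 t).deriv] at h
    rw [huapp]; linarith
  -- Lemma A : u vanishes on [0,1] × (1/a, ∞)
  have lemA : ∀ x ∈ Icc (0:ℝ) 1, ∀ t : ℝ, 1 / a < t → u (x, t) = 0 := by
    rintro x ⟨hx0, hx1⟩ t ht
    have hta : 0 < t := lt_of_le_of_lt (by positivity) ht
    rcases eq_or_lt_of_le hx1 with hx1' | hx1'
    · subst hx1'; exact hu1 t hta
    · -- transport along the characteristic (x + a s, t - s)
      set L : ℝ := (1 - x) / a with hL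
      have hLpos : 0 < L := div_pos (by linarith) ha
      have hLa : L * a = 1 - x := div_mul_cancel₀ _ ha.ne'
      have hLle : L ≤ 1 / a := by rw [hL]; gcongr <;> linarith
      have hφderiv : ∀ s : ℝ, HasDerivAt (fun s : ℝ => u ((x, t) + s • (a, -1)))
          (F ((x, t) + s • (a, -1)) (a, -1) (0, 1)
            + a * F ((x, t) + s • (a, -1)) (a, -1) (1, 0)) s := by
        intro s
        have h := ((hDf (x, t) (a, -1) (0, 1) s).add
          ((hDf (x, t) (a, -1) (1, 0) s).const_mul a))
        have heq : (fun s : ℝ => f ((x, t) + s • (a, -1)) (0, 1)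
            + a * f ((x, t) + s • (a, -1)) (1, 0))
            = fun s : ℝ => u ((x, t) + s • (a, -1)) := by
          funext s; rw [huapp]
        rw [← heq]
        exact h
      have hDzero : ∀ s ∈ Ioo (0:ℝ) L,
          F ((x, t) + s • ((a:ℝ), (-1:ℝ))) (a, -1) (0, 1)
            + a * F ((x, t) + s • ((a:ℝ), (-1:ℝ))) (a, -1) (1, 0) = 0 := by
        rintro s ⟨hs0, hsL⟩
        have hp1 : ((x, t) + s • ((a:ℝ), (-1:ℝ))).1 ∈ Ioo (0:ℝ) 1 := by
          simp only [Prod.smul_mk, Prod.mk_add_mk, smul_eq_mul]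
          have hsa : 0 < s * a := mul_pos hs0 ha
          have hsa2 : s * a < L * a := mul_lt_mul_of_pos_right hsL ha
          constructor
          · linarith
          · linarith [hLa]
        have hp2 : (0:ℝ) < ((x, t) + s • ((a:ℝ), (-1:ℝ))).2 := by
          simp only [Prod.smul_mk, Prod.mk_add_mk, smul_eq_mul]
          have h1 : s < 1 / a := lt_of_lt_of_le hsL hLle
          linarith
        have hpde' := hPDE _ hp1 hp2
        have hsym' := hsymm ((x, t) + s • ((a:ℝ), (-1:ℝ)))
        rw [hFexp _ _ a (-1), hFexp _ _ a (-1)]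
        linear_combination a * hsym' - hpde'
      obtain ⟨c, hc, hc'⟩ := exists_hasDerivAt_eq_slope
        (fun s : ℝ => u ((x, t) + s • (a, -1)))
        (fun s : ℝ => F ((x, t) + s • (a, -1)) (a, -1) (0, 1)
          + a * F ((x, t) + s • (a, -1)) (a, -1) (1, 0)) hLpos
        (fun s _ => ((hφderiv s).continuousAt).continuousWithinAt)
        (fun s _ => hφderiv s)
      rw [hDzero c hc, eq_comm, div_eq_zero_iff] at hc'
      have hslope : u ((x, t) + L • ((a:ℝ), (-1:ℝ))) = u ((x, t) + (0:ℝ) • ((a:ℝ), (-1:ℝ))) := by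
        rcases hc' with h | h
        · linarith
        · exact absurd h (by simpa using hLpos.ne')
      have h0 : ((x, t) : ℝ × ℝ) + (0:ℝ) • ((a:ℝ), (-1:ℝ)) = (x, t) := by simp
      have hLpt : ((x, t) : ℝ × ℝ) + L • ((a:ℝ), (-1:ℝ)) = (1, t - L) := by
        simp only [Prod.smul_mk, Prod.mk_add_mk, smul_eq_mul, Prod.mk.injEq]
        constructor
        · linarith [hLa]
        · ring
      rw [h0, hLpt] at hslope
      have htL : 0 < t - L := by linarith [lt_of_le_of_lt hLle ht]
      rw [hu1 (t - L) htL] at hslope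
      exact hslope.symm
  -- Lemma B : w vanishes for t > 2/a
  rintro x ⟨hx0, hx1⟩ t ht
  have h2a : (0:ℝ) < 2 / a := by positivity
  have h12 : (1:ℝ) / a < 2 / a := by gcongr <;> norm_num
  have hta : 0 < t := lt_trans h2a ht
  rcases eq_or_lt_of_le hx0 with hx0' | hx0'
  · rw [← hx0']; exact hbc0 t hta
  · set L : ℝ := x / a with hL
    have hLpos : 0 < L := div_pos hx0' ha
    have hLa : L * a = x := div_mul_cancel₀ _ ha.ne'
    have hLle : L ≤ 1 / a := by rw [hL]; gcongr <;> linarith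
    have hψderiv : ∀ s : ℝ, HasDerivAt (fun s : ℝ => W ((x, t) + s • (-a, -1)))
        (f ((x, t) + s • (-a, -1)) (-a, -1)) s := by
      intro s
      have h := line_hasDerivAt W hWd (x, t) (-a, -1) s
      rw [← hfdef] at h
      exact h
    have hDzero : ∀ s ∈ Ioo (0:ℝ) L,
        f ((x, t) + s • ((-a:ℝ), (-1:ℝ))) (-a, -1) = 0 := by
      rintro s ⟨hs0, hsL⟩
      have hp1 : ((x, t) + s • ((-a:ℝ), (-1:ℝ))).1 ∈ Icc (0:ℝ) 1 := by
        simp only [Prod.smul_mk, Prod.mk_add_mk, smul_eq_mul]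
        have hsa : 0 < s * a := mul_pos hs0 ha
        have hsa2 : s * a < L * a := mul_lt_mul_of_pos_right hsL ha
        constructor
        · linarith [hLa]
        · linarith
      have hp2 : (1:ℝ) / a < ((x, t) + s • ((-a:ℝ), (-1:ℝ))).2 := by
        simp only [Prod.smul_mk, Prod.mk_add_mk, smul_eq_mul]
        have h1 : s < 1 / a := lt_of_lt_of_le hsL hLle
        have h2 : (2:ℝ) / a = 1 / a + 1 / a := by ring
        linarith
      have huA := lemA _ hp1 _ hp2
      rw [Prod.mk.eta, huapp] at huA
      rw [hfexp _ (-a) (-1)]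
      linarith
    obtain ⟨c, hc, hc'⟩ := exists_hasDerivAt_eq_slope
      (fun s : ℝ => W ((x, t) + s • (-a, -1)))
      (fun s : ℝ => f ((x, t) + s • (-a, -1)) (-a, -1)) hLpos
      (fun s _ => ((hψderiv s).continuousAt).continuousWithinAt)
      (fun s _ => hψderiv s)
    rw [hDzero c hc, eq_comm, div_eq_zero_iff] at hc'
    have hslope : W ((x, t) + L • ((-a:ℝ), (-1:ℝ)))
        = W ((x, t) + (0:ℝ) • ((-a:ℝ), (-1:ℝ))) := by
      rcases hc' with h | h
      · linarith
      · exact absurd h (by simpa using hLpos.ne')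
    have h0 : ((x, t) : ℝ × ℝ) + (0:ℝ) • ((-a:ℝ), (-1:ℝ)) = (x, t) := by simp
    have hLpt : ((x, t) : ℝ × ℝ) + L • ((-a:ℝ), (-1:ℝ)) = (0, t - L) := by
      simp only [Prod.smul_mk, Prod.mk_add_mk, smul_eq_mul, Prod.mk.injEq]
      constructor
      · linarith [hLa]
      · ring
    rw [h0, hLpt] at hslope
    have htL : 0 < t - L := by linarith [lt_of_le_of_lt hLle (lt_trans h12 ht)]
    have hWval : ∀ p : ℝ × ℝ, W p = w p.1 p.2 := fun p => by rw [hW]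
    rw [hWval, hWval] at hslope
    simp only at hslope
    rw [hbc0 (t - L) htL] at hslope
    exact hslope.symm
end

section
/- Let a > 0 and p ∈ ℝ, and let w : [0,1]×[0,∞) → ℝ be twice continuously differentiable, satisfying the wave equation ∂²_t w − a² ∂²_x w = 0 on (0,1)×(0,∞), together with the boundary conditions w(0,t) = p·(∂_t w + a ∂_x w)(0,t) and (∂_t w + a ∂_x w)(1,t) = 0 for all t > 0. Then w(x,t) = 0 for every x ∈ [0,1] and every t > 2/a. -/
set_option maxHeartbeats 2000000 in
/-- finite time extinction for the unperturbed problem (1),(4),(3).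
Any `C²` solution of the wave equation `∂ₜ²w = a²∂ₓ²w` on `(0,1) × (0,∞)` with
boundary conditions `w(0,t) = p·(wₜ + a wₓ)(0,t)` and `(wₜ + a wₓ)(1,t) = 0` for
`t > 0` vanishes identically for `t > 2/a`, for any constant `p`. -/
theorem wave_p_boundary_finite_time_extinction
    (a p : ℝ) (ha : 0 < a) (w : ℝ → ℝ → ℝ)
    (hw : ContDiff ℝ 2 (fun q : ℝ × ℝ => w q.1 q.2))
    -- the wave equation ∂ₜ²w − a²∂ₓ²w = 0 on (0,1)×(0,∞)
    (hpde : ∀ x ∈ Set.Ioo (0:ℝ) 1, ∀ t > (0:ℝ),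
      deriv (deriv (w x)) t
        - a ^ 2 * deriv (fun y => deriv (fun z => w z t) y) x = 0)
    -- boundary condition at x = 0 : w(0,t) = p (wₜ + a wₓ)(0,t)
    (hbc0 : ∀ t > (0:ℝ),
      w 0 t = p * (deriv (w 0) t + a * deriv (fun y => w y t) 0))
    -- boundary condition at x = 1 : (wₜ + a wₓ)(1,t) = 0
    (hbc1 : ∀ t > (0:ℝ), deriv (w 1) t + a * deriv (fun y => w y t) 1 = 0) :
    ∀ x ∈ Set.Icc (0:ℝ) 1, ∀ t > 2 / a, w x t = 0 := by
  have hW2 : ContDiff ℝ 2 (fun q : ℝ × ℝ => w q.1 q.2) := hw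
  set W : ℝ × ℝ → ℝ := fun q : ℝ × ℝ => w q.1 q.2 with hWdef
  have hW1 : Differentiable ℝ W := hW2.differentiable (by norm_num)
  set F : ℝ × ℝ → (ℝ × ℝ) →L[ℝ] ℝ := fderiv ℝ W with hFdef
  have hFc : ContDiff ℝ 1 F := hW2.fderiv_right (by norm_num)
  have hFd : Differentiable ℝ F := hFc.differentiable (by norm_num)
  -- partial derivatives as applications of F
  have hdt : ∀ x t : ℝ, HasDerivAt (w x) (F (x, t) (0, 1)) t := by
    intro x t
    have hc : HasDerivAt (fun s : ℝ => ((x, s) : ℝ × ℝ)) ((0 : ℝ), (1 : ℝ)) t :=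
      (hasDerivAt_const t x).prodMk (hasDerivAt_id t)
    exact (hW1 (x, t)).hasFDerivAt.comp_hasDerivAt t hc
  have hdx : ∀ x t : ℝ, HasDerivAt (fun y => w y t) (F (x, t) (1, 0)) x := by
    intro x t
    have hc : HasDerivAt (fun s : ℝ => ((s, t) : ℝ × ℝ)) ((1 : ℝ), (0 : ℝ)) x :=
      (hasDerivAt_id x).prodMk (hasDerivAt_const x t)
    exact (hW1 (x, t)).hasFDerivAt.comp_hasDerivAt x hc
  -- second derivative
  have hsymm : ∀ (q : ℝ × ℝ) (u v : ℝ × ℝ), fderiv ℝ F q u v = fderiv ℝ F q v u := by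
    intro q u v
    exact second_derivative_symmetric (fun y => (hW1 y).hasFDerivAt) (hFd q).hasFDerivAt u v
  have hFu : ∀ (u : ℝ × ℝ) (q : ℝ × ℝ), HasFDerivAt (fun q' => F q' u)
      ((ContinuousLinearMap.apply ℝ ℝ u).comp (fderiv ℝ F q)) q := by
    intro u q
    exact ((ContinuousLinearMap.apply ℝ ℝ u).hasFDerivAt).comp q (hFd q).hasFDerivAt
  -- the PDE in terms of the second derivative
  have hpde' : ∀ x ∈ Set.Ioo (0:ℝ) 1, ∀ t > (0:ℝ),
      fderiv ℝ F (x, t) (0, 1) (0, 1) = a ^ 2 * fderiv ℝ F (x, t) (1, 0) (1, 0) := by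
    intro x hx t ht
    have h := hpde x hx t ht
    have e1 : deriv (w x) = fun s => F (x, s) ((0 : ℝ), (1 : ℝ)) :=
      funext fun s => (hdt x s).deriv
    have e2 : (fun y => deriv (fun z => w z t) y) = fun y => F (y, t) ((1 : ℝ), (0 : ℝ)) :=
      funext fun y => (hdx y t).deriv
    rw [e1, e2] at h
    have d1 : deriv (fun s => F (x, s) ((0 : ℝ), (1 : ℝ))) t
        = fderiv ℝ F (x, t) (0, 1) (0, 1) := by
      have hc : HasDerivAt (fun s : ℝ => ((x, s) : ℝ × ℝ)) ((0 : ℝ), (1 : ℝ)) t :=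
        (hasDerivAt_const t x).prodMk (hasDerivAt_id t)
      exact ((hFu ((0 : ℝ), (1 : ℝ)) (x, t)).comp_hasDerivAt t hc).deriv
    have d2 : deriv (fun y => F (y, t) ((1 : ℝ), (0 : ℝ))) x
        = fderiv ℝ F (x, t) (1, 0) (1, 0) := by
      have hc : HasDerivAt (fun s : ℝ => ((s, t) : ℝ × ℝ)) ((1 : ℝ), (0 : ℝ)) x :=
        (hasDerivAt_id x).prodMk (hasDerivAt_const x t)
      exact ((hFu ((1 : ℝ), (0 : ℝ)) (x, t)).comp_hasDerivAt x hc).deriv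
    rw [d1, d2] at h
    linarith
  -- the transported quantity vanishes along left-moving characteristics
  have hkey : ∀ x ∈ Set.Ioo (0:ℝ) 1, ∀ t > (0:ℝ),
      fderiv ℝ F (x, t) (a, -1) ((a, 1) : ℝ × ℝ) = 0 := by
    intro x hx t ht
    have e1 : ((a, -1) : ℝ × ℝ) = a • ((1 : ℝ), (0 : ℝ)) + (-1 : ℝ) • ((0 : ℝ), (1 : ℝ)) := by
      simp
    have e2 : ((a, 1) : ℝ × ℝ) = a • ((1 : ℝ), (0 : ℝ)) + ((0 : ℝ), (1 : ℝ)) := by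
      simp
    rw [e1, e2]
    simp only [map_add, map_smul, ContinuousLinearMap.add_apply,
      ContinuousLinearMap.coe_smul', Pi.smul_apply, smul_eq_mul, ContinuousLinearMap.neg_apply]
    have hs := hsymm (x, t) ((1 : ℝ), (0 : ℝ)) ((0 : ℝ), (1 : ℝ))
    have hp := hpde' x hx t ht
    nlinarith [hs, hp]
  -- continuity of v = F · (a,1)
  have hvcont : Continuous (fun q : ℝ × ℝ => F q ((a, 1) : ℝ × ℝ)) :=
    (ContinuousLinearMap.apply ℝ ℝ ((a, 1) : ℝ × ℝ)).continuous.comp hFc.continuous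
  -- boundary value of v at x = 1
  have hv1 : ∀ τ > (0:ℝ), F (1, τ) ((a, 1) : ℝ × ℝ) = 0 := by
    intro τ hτ
    have h := hbc1 τ hτ
    rw [(hdt 1 τ).deriv, (hdx 1 τ).deriv] at h
    have e2 : ((a, 1) : ℝ × ℝ) = a • ((1 : ℝ), (0 : ℝ)) + ((0 : ℝ), (1 : ℝ)) := by simp
    rw [e2, map_add, map_smul]
    simp only [smul_eq_mul]
    linarith
  -- Step 1 : v vanishes on the region t > (1-x)/a, for 0 < x ≤ 1
  have step1 : ∀ x : ℝ, 0 < x → x ≤ 1 → ∀ t : ℝ, (1 - x) / a < t →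
      F (x, t) ((a, 1) : ℝ × ℝ) = 0 := by
    intro x hx0 hx1 t htx
    set s1 : ℝ := (1 - x) / a with hs1def
    have hs1 : 0 ≤ s1 := div_nonneg (by linarith) ha.le
    have has1 : a * s1 = 1 - x := by
      rw [hs1def]; field_simp
    set g : ℝ → ℝ := fun s => F (x + a * s, t - s) ((a, 1) : ℝ × ℝ) with hgdef
    have hgc : ContinuousOn g (Set.Icc 0 s1) := by
      apply Continuous.continuousOn
      exact hvcont.comp ((continuous_const.add (continuous_const.mul continuous_id)).prodMk
        (continuous_const.sub continuous_id))
    have hgd : ∀ s ∈ Set.Ico 0 s1, HasDerivWithinAt g 0 (Set.Ici s) s := by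
      intro s hs
      have hc : HasDerivAt (fun s : ℝ => ((x + a * s, t - s) : ℝ × ℝ)) ((a, -1) : ℝ × ℝ) s := by
        have h1 : HasDerivAt (fun s : ℝ => x + a * s) a s := by
          simpa using ((hasDerivAt_id s).const_mul a).const_add x
        have h2 : HasDerivAt (fun s : ℝ => t - s) (-1) s := by
          simpa [Pi.sub_def] using (hasDerivAt_const s t).sub (hasDerivAt_id s)
        exact h1.prodMk h2
      have hxm : x + a * s ∈ Set.Ioo (0:ℝ) 1 := by
        constructor
        · nlinarith [hs.1]
        · nlinarith [hs.2]
      have htm : 0 < t - s := by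
        have : s < t := lt_of_lt_of_le hs.2 (le_of_lt htx)
        linarith
      have hd : HasDerivAt g (fderiv ℝ F (x + a * s, t - s) ((a, -1) : ℝ × ℝ)
          ((a, 1) : ℝ × ℝ)) s :=
        by have := (hFu ((a, 1) : ℝ × ℝ) (x + a * s, t - s)).comp_hasDerivAt s hc; exact this
      rw [hkey _ hxm _ htm] at hd
      exact hd.hasDerivWithinAt
    have hconst := constant_of_has_deriv_right_zero hgc hgd s1 (Set.right_mem_Icc.2 hs1)
    have hg1 : g s1 = 0 := by
      have hx1' : x + a * s1 = 1 := by rw [has1]; ring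
      have ht1 : 0 < t - s1 := by linarith
      show F (x + a * s1, t - s1) ((a, 1) : ℝ × ℝ) = 0
      rw [hx1']
      exact hv1 _ ht1
    have : g 0 = F (x, t) ((a, 1) : ℝ × ℝ) := by
      show F (x + a * 0, t - 0) ((a, 1) : ℝ × ℝ) = _
      norm_num
    rw [hg1] at hconst
    rw [← this]
    exact hconst.symm
  -- Step 1' : v vanishes on [0,1] × (1/a, ∞)
  have step1' : ∀ x ∈ Set.Icc (0:ℝ) 1, ∀ t : ℝ, 1 / a < t →
      F (x, t) ((a, 1) : ℝ × ℝ) = 0 := by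
    intro x hx t hta
    rcases eq_or_lt_of_le hx.1 with h0 | h0
    · -- x = 0 : by continuity from x > 0
      subst h0
      have hlim : Filter.Tendsto (fun n : ℕ => ((1 / ((n : ℝ) + 1), t) : ℝ × ℝ))
          Filter.atTop (nhds ((0 : ℝ), t)) :=
        (tendsto_one_div_add_atTop_nhds_zero_nat).prodMk_nhds tendsto_const_nhds
      have hlim2 : Filter.Tendsto (fun n : ℕ => F (1 / ((n : ℝ) + 1), t) ((a, 1) : ℝ × ℝ))
          Filter.atTop (nhds (F ((0 : ℝ), t) ((a, 1) : ℝ × ℝ))) :=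
        (hvcont.tendsto _).comp hlim
      have hzero : ∀ n : ℕ, F (1 / ((n : ℝ) + 1), t) ((a, 1) : ℝ × ℝ) = 0 := by
        intro n
        have hn0 : (0:ℝ) < 1 / ((n : ℝ) + 1) := by positivity
        have hn1 : 1 / ((n : ℝ) + 1) ≤ 1 := by
          rw [div_le_one (by positivity)]; simp
        apply step1 _ hn0 hn1
        have h1 : (1 - 1 / ((n : ℝ) + 1)) / a < 1 / a := by
          apply div_lt_div_of_pos_right _ ha; linarith
        linarith
      simp only [hzero] at hlim2
      exact (tendsto_nhds_unique tendsto_const_nhds hlim2).symm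
    · apply step1 x h0 hx.2
      have h1 : (1 - x) / a ≤ 1 / a := by
        apply div_le_div_of_nonneg_right _ ha.le
        linarith
      linarith
  -- combination lemma for the boundary condition at x = 0
  have hcomb : ∀ q : ℝ × ℝ, F q ((0 : ℝ), (1 : ℝ)) + a * F q ((1 : ℝ), (0 : ℝ))
      = F q ((a, 1) : ℝ × ℝ) := by
    intro q
    have e2 : ((a, 1) : ℝ × ℝ) = a • ((1 : ℝ), (0 : ℝ)) + ((0 : ℝ), (1 : ℝ)) := by simp
    rw [e2, map_add, map_smul]
    simp only [smul_eq_mul]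
    ring
  -- w vanishes at x = 0 for t > 1/a
  have hw0 : ∀ τ : ℝ, 1 / a < τ → w 0 τ = 0 := by
    intro τ hτ
    have hτ0 : 0 < τ := lt_trans (by positivity) hτ
    have h := hbc0 τ hτ0
    rw [(hdt 0 τ).deriv, (hdx 0 τ).deriv, hcomb,
      step1' 0 (Set.mem_Icc.2 ⟨le_rfl, zero_le_one⟩) τ hτ] at h
    simpa using h
  -- Step 2 : transport w along right-moving characteristics
  intro x hx t ht
  have h2a0 : (0:ℝ) < 2 / a := by positivity
  have hxa : x / a ≤ 1 / a := div_le_div_of_nonneg_right hx.2 ha.le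
  have hxa0 : 0 ≤ x / a := div_nonneg hx.1 ha.le
  have hta : 1 / a < t - x / a := by
    have : 2 / a - 1 / a = 1 / a := by ring
    linarith
  set h : ℝ → ℝ := fun s => w (x - a * s) (t - s) with hhdef
  have hhc : ContinuousOn h (Set.Icc 0 (x / a)) := by
    apply Continuous.continuousOn
    have : Continuous W := hW1.continuous
    exact this.comp ((continuous_const.sub (continuous_const.mul continuous_id)).prodMk
      (continuous_const.sub continuous_id))
  have hhd : ∀ s ∈ Set.Ico 0 (x / a), HasDerivWithinAt h 0 (Set.Ici s) s := by
    intro s hs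
    have hc : HasDerivAt (fun s : ℝ => ((x - a * s, t - s) : ℝ × ℝ)) ((-a, -1) : ℝ × ℝ) s := by
      have h1 : HasDerivAt (fun s : ℝ => x - a * s) (-a) s := by
        simpa [Pi.sub_def] using (hasDerivAt_const s x).sub ((hasDerivAt_id s).const_mul a)
      have h2 : HasDerivAt (fun s : ℝ => t - s) (-1) s := by
        simpa [Pi.sub_def] using (hasDerivAt_const s t).sub (hasDerivAt_id s)
      exact h1.prodMk h2
    have hd : HasDerivAt h (F (x - a * s, t - s) ((-a, -1) : ℝ × ℝ)) s :=
      by have := (hW1 (x - a * s, t - s)).hasFDerivAt.comp_hasDerivAt s hc; exact this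
    have hneg : ((-a, -1) : ℝ × ℝ) = -((a, 1) : ℝ × ℝ) := by simp
    have hmem : x - a * s ∈ Set.Icc (0:ℝ) 1 := by
      constructor
      · have : a * s < a * (x / a) := by
          apply mul_lt_mul_of_pos_left hs.2 ha
        have hax : a * (x / a) = x := by field_simp
        linarith
      · nlinarith [hs.1, hx.2]
    have htm : 1 / a < t - s := by
      have : s < x / a := hs.2
      linarith
    have hv0 : F (x - a * s, t - s) ((a, 1) : ℝ × ℝ) = 0 := step1' _ hmem _ htm
    rw [hneg, map_neg, hv0] at hd
    simpa using hd.hasDerivWithinAt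
  have hconst := constant_of_has_deriv_right_zero hhc hhd (x / a) (Set.right_mem_Icc.2 hxa0)
  have hxx : x - a * (x / a) = 0 := by field_simp; ring
  have hend : h (x / a) = w 0 (t - x / a) := by
    show w (x - a * (x / a)) (t - x / a) = _
    rw [hxx]
  have hstart : h 0 = w x t := by
    show w (x - a * 0) (t - 0) = _
    norm_num
  rw [hend, hstart, hw0 _ hta] at hconst
  exact hconst.symm
end

section
/- Let a > 0 and q ∈ ℝ, and let w : [0,1]×[0,∞) → ℝ be twice continuously differentiable, satisfying the wave equation ∂²_t w − a² ∂²_x w = 0 on (0,1)×(0,∞), together with the boundary conditions w(1,t) = q·(∂_t w − a ∂_x w)(1,t) and (∂_t w − a ∂_x w)(0,t) = 0 for all t > 0. Then w(x,t) = 0 for every x ∈ [0,1] and every t > 2/a. -/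
set_option maxHeartbeats 1000000


/-- finite time extinction for the mirror problem (1),(5),(3).
Any `C²` solution of the wave equation `∂ₜ²w = a²∂ₓ²w` on `(0,1) × (0,∞)` with
boundary conditions `w(1,t) = q·(wₜ − a wₓ)(1,t)` and `(wₜ − a wₓ)(0,t) = 0` for
`t > 0` vanishes identically for `t > 2/a`, for any constant `q`. -/
theorem wave_q_boundary_finite_time_extinction
    (a q : ℝ) (ha : 0 < a) (w : ℝ → ℝ → ℝ)
    (hw : ContDiff ℝ 2 (fun p : ℝ × ℝ => w p.1 p.2))
    -- the wave equation ∂ₜ²w − a²∂ₓ²w = 0 on (0,1)×(0,∞)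
    (hpde : ∀ x ∈ Set.Ioo (0:ℝ) 1, ∀ t > (0:ℝ),
      deriv (deriv (w x)) t
        - a ^ 2 * deriv (fun y => deriv (fun z => w z t) y) x = 0)
    -- boundary condition at x = 1 : w(1,t) = q (wₜ − a wₓ)(1,t)
    (hbc1 : ∀ t > (0:ℝ),
      w 1 t = q * (deriv (w 1) t - a * deriv (fun y => w y t) 1))
    -- boundary condition at x = 0 : (wₜ − a wₓ)(0,t) = 0
    (hbc0 : ∀ t > (0:ℝ), deriv (w 0) t - a * deriv (fun y => w y t) 0 = 0) :
    ∀ x ∈ Set.Icc (0:ℝ) 1, ∀ t > 2 / a, w x t = 0 := by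
  set W : ℝ × ℝ → ℝ := fun p => w p.1 p.2 with hWdef
  have hW : ContDiff ℝ 2 W := hw
  have hWd : Differentiable ℝ W := hW.differentiable (by norm_num)
  have hF : ContDiff ℝ 1 (fun p => fderiv ℝ W p) := hW.fderiv_right (by norm_num)
  have hFd : Differentiable ℝ (fun p => fderiv ℝ W p) := hF.differentiable (by norm_num)
  set H : ℝ × ℝ → (ℝ × ℝ) →L[ℝ] (ℝ × ℝ) →L[ℝ] ℝ :=
    fun p => fderiv ℝ (fun p => fderiv ℝ W p) p with hHdef
  -- derivative of W along a parametrized line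
  have lineD : ∀ (c d v1 v2 s : ℝ),
      HasDerivAt (fun s : ℝ => ((c + v1 * s, d + v2 * s) : ℝ × ℝ)) (v1, v2) s := by
    intro c d v1 v2 s
    have h1 : HasDerivAt (fun s : ℝ => c + v1 * s) v1 s := by
      simpa using ((hasDerivAt_id s).const_mul v1).const_add c
    have h2 : HasDerivAt (fun s : ℝ => d + v2 * s) v2 s := by
      simpa using ((hasDerivAt_id s).const_mul v2).const_add d
    exact h1.prodMk h2
  -- partial derivatives in terms of the full derivative
  have hx_deriv : ∀ x t : ℝ,
      HasDerivAt (fun y => w y t) (fderiv ℝ W (x, t) (1, 0)) x := by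
    intro x t
    have hline : HasDerivAt (fun y : ℝ => ((y, t) : ℝ × ℝ)) ((1 : ℝ), (0 : ℝ)) x :=
      (hasDerivAt_id x).prodMk (hasDerivAt_const x t)
    exact (hWd (x, t)).hasFDerivAt.comp_hasDerivAt x hline
  have ht_deriv : ∀ x t : ℝ,
      HasDerivAt (fun s => w x s) (fderiv ℝ W (x, t) (0, 1)) t := by
    intro x t
    have hline : HasDerivAt (fun s : ℝ => ((x, s) : ℝ × ℝ)) ((0 : ℝ), (1 : ℝ)) t :=
      (hasDerivAt_const t x).prodMk (hasDerivAt_id t)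
    exact (hWd (x, t)).hasFDerivAt.comp_hasDerivAt t hline
  -- the Riemann invariant u = w_t - a w_x as a directional derivative
  set v : ℝ × ℝ := (-a, 1) with hvdef
  set u : ℝ × ℝ → ℝ := fun p => fderiv ℝ W p v with hudef
  have hvsplit : v = ((0 : ℝ), (1 : ℝ)) - a • ((1 : ℝ), (0 : ℝ)) := by
    simp [hvdef, Prod.ext_iff]
  have hu_eq : ∀ x t : ℝ,
      u (x, t) = deriv (w x) t - a * deriv (fun y => w y t) x := by
    intro x t
    have h1 : deriv (w x) t = fderiv ℝ W (x, t) (0, 1) := (ht_deriv x t).deriv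
    have h2 : deriv (fun y => w y t) x = fderiv ℝ W (x, t) (1, 0) := (hx_deriv x t).deriv
    rw [h1, h2, hudef]
    simp only [hvsplit, map_sub, map_smul, smul_eq_mul]
  -- u is differentiable, with derivative given by the second derivative of W
  have hu_fd : ∀ p : ℝ × ℝ,
      HasFDerivAt u ((ContinuousLinearMap.apply ℝ ℝ v).comp (H p)) p := by
    intro p
    exact (ContinuousLinearMap.apply ℝ ℝ v).hasFDerivAt.comp p (hFd p).hasFDerivAt
  have hu_cont : Continuous u := by
    have : Differentiable ℝ u := fun p => (hu_fd p).differentiableAt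
    exact this.continuous
  -- symmetry of the second derivative
  have hsymm : ∀ (p : ℝ × ℝ) (v₁ v₂ : ℝ × ℝ), H p v₁ v₂ = H p v₂ v₁ := by
    intro p v₁ v₂
    exact second_derivative_symmetric (fun y => (hWd y).hasFDerivAt)
      (hFd p).hasFDerivAt v₁ v₂
  -- second partial derivatives in terms of H
  have htt : ∀ x t : ℝ, deriv (deriv (w x)) t = H (x, t) (0, 1) (0, 1) := by
    intro x t
    have heq : deriv (w x) = fun s => fderiv ℝ W (x, s) (0, 1) := by
      funext s; exact (ht_deriv x s).deriv
    have hline : HasDerivAt (fun s : ℝ => ((x, s) : ℝ × ℝ)) ((0 : ℝ), (1 : ℝ)) t :=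
      (hasDerivAt_const t x).prodMk (hasDerivAt_id t)
    have hcomp : HasDerivAt (fun s => fderiv ℝ W (x, s) (0, 1))
        (H (x, t) (0, 1) (0, 1)) t := by
      have h1 : HasFDerivAt (fun p : ℝ × ℝ => fderiv ℝ W p ((0 : ℝ), (1 : ℝ)))
          ((ContinuousLinearMap.apply ℝ ℝ ((0 : ℝ), (1 : ℝ))).comp (H (x, t))) (x, t) :=
        (ContinuousLinearMap.apply ℝ ℝ ((0 : ℝ), (1 : ℝ))).hasFDerivAt.comp (x, t)
          (hFd (x, t)).hasFDerivAt
      exact h1.comp_hasDerivAt t hline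
    rw [heq]; exact hcomp.deriv
  have hxx : ∀ x t : ℝ,
      deriv (fun y => deriv (fun z => w z t) y) x = H (x, t) (1, 0) (1, 0) := by
    intro x t
    have heq : (fun y => deriv (fun z => w z t) y) = fun y => fderiv ℝ W (y, t) (1, 0) := by
      funext y; exact (hx_deriv y t).deriv
    have hline : HasDerivAt (fun y : ℝ => ((y, t) : ℝ × ℝ)) ((1 : ℝ), (0 : ℝ)) x :=
      (hasDerivAt_id x).prodMk (hasDerivAt_const x t)
    have hcomp : HasDerivAt (fun y => fderiv ℝ W (y, t) (1, 0))
        (H (x, t) (1, 0) (1, 0)) x := by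
      have h1 : HasFDerivAt (fun p : ℝ × ℝ => fderiv ℝ W p ((1 : ℝ), (0 : ℝ)))
          ((ContinuousLinearMap.apply ℝ ℝ ((1 : ℝ), (0 : ℝ))).comp (H (x, t))) (x, t) :=
        (ContinuousLinearMap.apply ℝ ℝ ((1 : ℝ), (0 : ℝ))).hasFDerivAt.comp (x, t)
          (hFd (x, t)).hasFDerivAt
      exact h1.comp_hasDerivAt x hline
    rw [heq]; exact hcomp.deriv
  -- PDE rewritten: the derivative of u in the direction (a,1) vanishes in the interior
  have hpde' : ∀ x t : ℝ, x ∈ Set.Ioo (0:ℝ) 1 → 0 < t →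
      H (x, t) (a, 1) v = 0 := by
    intro x t hx ht
    have h0 := hpde x hx t ht
    rw [htt x t, hxx x t] at h0
    have hd : ((a, 1) : ℝ × ℝ) = a • ((1 : ℝ), (0 : ℝ)) + ((0 : ℝ), (1 : ℝ)) := by
      simp [Prod.ext_iff]
    have hcross := hsymm (x, t) ((1 : ℝ), (0 : ℝ)) ((0 : ℝ), (1 : ℝ))
    rw [hd, hvsplit]
    simp only [map_add, map_smul, map_sub, smul_eq_mul, ContinuousLinearMap.add_apply,
      ContinuousLinearMap.smul_apply, ContinuousLinearMap.sub_apply, smul_eq_mul]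
    linear_combination h0 + a * hcross
  -- derivative of u along lines in direction (a,1)
  have hu_line : ∀ (c d s : ℝ),
      HasDerivAt (fun s : ℝ => u (c + a * s, d + 1 * s))
        (H (c + a * s, d + 1 * s) (a, 1) v) s := by
    intro c d s
    have h := (hu_fd (c + a * s, d + 1 * s)).comp_hasDerivAt s (lineD c d a 1 s)
    simpa [Function.comp_def] using h
  -- u vanishes for t > x / a
  have hE : ∀ x ∈ Set.Icc (0:ℝ) 1, ∀ t : ℝ, x / a < t → u (x, t) = 0 := by
    intro x hx t ht
    rcases eq_or_lt_of_le hx.1 with hx0 | hx0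
    · -- x = 0
      have ht0 : 0 < t := by
        rw [← hx0] at ht; simpa using ht
      rw [← hx0, hu_eq 0 t]
      exact hbc0 t ht0
    · -- 0 < x : propagate from the left boundary
      set L := x / a with hLdef
      have hL : 0 < L := div_pos hx0 ha
      set d : ℝ := t - L with hddef
      have hd0 : 0 < d := by simp [hddef]; linarith
      set g : ℝ → ℝ := fun s => u (0 + a * s, d + 1 * s) with hgdef
      have hg_diff : Differentiable ℝ g := fun s => (hu_line 0 d s).differentiableAt
      have hg_deriv0 : ∀ s ∈ interior (Set.Icc (0:ℝ) L), deriv g s = 0 := by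
        intro s hs
        rw [interior_Icc] at hs
        have hderiv : deriv g s = H (0 + a * s, d + 1 * s) (a, 1) v :=
          (hu_line 0 d s).deriv
        rw [hderiv]
        apply hpde'
        · constructor
          · nlinarith [hs.1]
          · have : a * s < a * L := by nlinarith [hs.2]
            have hxL : a * L = x := by
              rw [hLdef]; field_simp
            nlinarith [hx.2]
        · nlinarith [hs.1]
      have hg_cont : ContinuousOn g (Set.Icc 0 L) := hg_diff.continuous.continuousOn
      have hg_diffOn : DifferentiableOn ℝ g (interior (Set.Icc (0:ℝ) L)) :=
        hg_diff.differentiableOn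
      have hmono : MonotoneOn g (Set.Icc 0 L) :=
        monotoneOn_of_deriv_nonneg (convex_Icc 0 L) hg_cont hg_diffOn
          (fun s hs => le_of_eq (hg_deriv0 s hs).symm)
      have hanti : AntitoneOn g (Set.Icc 0 L) :=
        antitoneOn_of_deriv_nonpos (convex_Icc 0 L) hg_cont hg_diffOn
          (fun s hs => le_of_eq (hg_deriv0 s hs))
      have h0mem : (0:ℝ) ∈ Set.Icc (0:ℝ) L := ⟨le_rfl, hL.le⟩
      have hLmem : L ∈ Set.Icc (0:ℝ) L := ⟨hL.le, le_rfl⟩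
      have hgeq : g L = g 0 :=
        le_antisymm (hanti h0mem hLmem hL.le) (hmono h0mem hLmem hL.le)
      have hg0 : g 0 = 0 := by
        have : u (0, d) = 0 := by
          rw [hu_eq 0 d]; exact hbc0 d hd0
        simpa [hgdef] using this
      have hgL : g L = u (x, t) := by
        have h1 : (0:ℝ) + a * L = x := by rw [hLdef]; field_simp; ring
        have h2 : d + 1 * L = t := by rw [hddef]; ring
        simp only [hgdef]
        rw [h1, h2]
      rw [← hgL, hgeq, hg0]
  -- w vanishes on the right boundary for t > 1/a
  have hF1 : ∀ t : ℝ, 1 / a < t → w 1 t = 0 := by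
    intro t ht
    have ht0 : 0 < t := lt_trans (by positivity) ht
    rw [hbc1 t ht0]
    have h1 : u (1, t) = 0 := hE 1 ⟨zero_le_one, le_rfl⟩ t (by simpa using ht)
    rw [hu_eq 1 t] at h1
    rw [h1, mul_zero]
  -- final propagation from the right boundary
  intro x hx t ht
  set M := (1 - x) / a with hMdef
  have hM0 : 0 ≤ M := div_nonneg (by linarith [hx.2]) ha.le
  set d : ℝ := t - M with hddef
  set h : ℝ → ℝ := fun s => W (1 + (-a) * s, d + 1 * s) with hhdef
  have hh_deriv : ∀ s : ℝ, HasDerivAt h (u (1 + (-a) * s, d + 1 * s)) s := by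
    intro s
    have hline := lineD 1 d (-a) 1 s
    have := (hWd (1 + (-a) * s, d + 1 * s)).hasFDerivAt.comp_hasDerivAt s hline
    simpa [hhdef, hudef, hvdef, Function.comp_def] using this
  have ht2 : 2 / a < t := ht
  have hu_on : ∀ s ∈ Set.Icc (0:ℝ) M, u (1 + (-a) * s, d + 1 * s) = 0 := by
    intro s hs
    have haM : a * M = 1 - x := by rw [hMdef]; field_simp
    have hsM : a * s ≤ a * M := mul_le_mul_of_nonneg_left hs.2 ha.le
    have hs0 : 0 ≤ a * s := mul_nonneg ha.le hs.1
    apply hE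
    · exact ⟨by linarith [hx.1], by linarith⟩
    · rw [div_lt_iff₀ ha]
      have h2a : 2 < a * t := by rw [div_lt_iff₀ ha] at ht2; linarith
      have had : a * d = a * t - (1 - x) := by rw [hddef, mul_sub, haM]
      have hexp : (d + 1 * s) * a = a * d + a * s := by ring
      linarith [hx.1]
  have hconst : ∀ s ∈ Set.Icc (0:ℝ) M, h s = h 0 := by
    apply constant_of_has_deriv_right_zero
    · exact (fun s _ => ((hh_deriv s).continuousAt).continuousWithinAt)
    · intro s hs
      have h0 := (hh_deriv s).hasDerivWithinAt (s := Set.Ici s)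
      rwa [hu_on s ⟨hs.1, hs.2.le⟩] at h0
  have hM_mem : M ∈ Set.Icc (0:ℝ) M := ⟨hM0, le_rfl⟩
  have hhM : h M = w x t := by
    have h1 : 1 + (-a) * M = x := by rw [hMdef]; field_simp; ring
    have h2 : d + 1 * M = t := by rw [hddef]; ring
    simp only [hhdef]
    rw [h1, h2]
  have hh0 : h 0 = 0 := by
    have hd_big : 1 / a < d := by
      rw [div_lt_iff₀ ha]
      have h2a : 2 < a * t := by rw [div_lt_iff₀ ha] at ht2; linarith
      have hMa : a * M = 1 - x := by rw [hMdef]; field_simp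
      have had : a * d = a * t - (1 - x) := by rw [hddef, mul_sub, hMa]
      have hexp : d * a = a * d := mul_comm d a
      linarith [hx.1]
    have := hF1 d hd_big
    simpa [hhdef, hWdef] using this
  rw [← hhM, hconst M hM_mem, hh0]
end

section
/- Let a > 0, p ∈ ℝ, let c : [0,1]×[0,∞) → ℝ be continuous, and let w, u : [0,1]×[0,∞) → ℝ be continuously differentiable functions satisfying ∂_t w + a ∂_x w = u and ∂_t u − a ∂_x u + c·w = 0 on (0,1)×(0,∞), together with the boundary conditions w(0,t) = p·u(0,t) and u(1,t) = 0 for all t > 0. Then for every x ∈ [0,1] and every t > 4/a one has w(x,t) = −∫_{t−x/a}^{t} ∫_{2τ−t+(x−1)/a}^{τ} c(x + a(2τ−t−ξ), ξ) · w(x + a(2τ−t−ξ), ξ) dξ dτ − p ∫_{t−(x+1)/a}^{t−x/a} c(a(t−τ)−x, τ) · w(a(t−τ)−x, τ) dτ. -/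
open Set intervalIntegral

private lemma hasDerivAt_line (F : ℝ → ℝ → ℝ)
    (hF : ContDiff ℝ 1 (fun q : ℝ × ℝ => F q.1 q.2)) (b t₀ α β s : ℝ) :
    HasDerivAt (fun r => F (b + α * r) (t₀ + β * r))
      (α * deriv (fun y => F y (t₀ + β * s)) (b + α * s)
        + β * deriv (F (b + α * s)) (t₀ + β * s)) s := by
  set U : ℝ × ℝ → ℝ := fun q => F q.1 q.2 with hUdef
  have hU : HasFDerivAt U (fderiv ℝ U (b + α * s, t₀ + β * s)) (b + α * s, t₀ + β * s) :=
    (hF.differentiable one_ne_zero _).hasFDerivAt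
  have h1 : HasDerivAt (fun r : ℝ => b + α * r) α s := by
    simpa using ((hasDerivAt_id s).const_mul α).const_add b
  have h2 : HasDerivAt (fun r : ℝ => t₀ + β * r) β s := by
    simpa using ((hasDerivAt_id s).const_mul β).const_add t₀
  have hγ : HasDerivAt (fun r : ℝ => ((b + α * r, t₀ + β * r) : ℝ × ℝ)) (α, β) s := h1.prodMk h2
  have hcomp := HasFDerivAt.comp_hasDerivAt_of_eq s hU hγ rfl
  have hx : HasDerivAt (fun y => F y (t₀ + β * s))
      (fderiv ℝ U (b + α * s, t₀ + β * s) (1, 0)) (b + α * s) := by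
    have h : HasDerivAt (fun y : ℝ => ((y, t₀ + β * s) : ℝ × ℝ)) (1, 0) (b + α * s) :=
      (hasDerivAt_id _).prodMk (hasDerivAt_const _ _)
    exact HasFDerivAt.comp_hasDerivAt_of_eq _ hU h rfl
  have ht : HasDerivAt (F (b + α * s))
      (fderiv ℝ U (b + α * s, t₀ + β * s) (0, 1)) (t₀ + β * s) := by
    have h : HasDerivAt (fun y : ℝ => ((b + α * s, y) : ℝ × ℝ)) (0, 1) (t₀ + β * s) :=
      (hasDerivAt_const _ _).prodMk (hasDerivAt_id _)
    exact HasFDerivAt.comp_hasDerivAt_of_eq _ hU h rfl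
  have key : fderiv ℝ U (b + α * s, t₀ + β * s) (α, β)
      = α * fderiv ℝ U (b + α * s, t₀ + β * s) (1, 0)
        + β * fderiv ℝ U (b + α * s, t₀ + β * s) (0, 1) := by
    have h : ((α, β) : ℝ × ℝ) = α • ((1, 0) : ℝ × ℝ) + β • ((0, 1) : ℝ × ℝ) := by
      simp [Prod.ext_iff]
    rw [h, map_add, map_smul, map_smul, smul_eq_mul, smul_eq_mul]
  rw [hx.deriv, ht.deriv, ← key]
  exact hcomp

/-- Representation of `u` by integration along characteristics of slope `-a`
from the boundary `x = 1`. -/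
private lemma u_repr (a : ℝ) (ha : 0 < a)
    (c w u : ℝ → ℝ → ℝ)
    (hc : Continuous (fun q : ℝ × ℝ => c q.1 q.2))
    (hw : ContDiff ℝ 1 (fun q : ℝ × ℝ => w q.1 q.2))
    (hu : ContDiff ℝ 1 (fun q : ℝ × ℝ => u q.1 q.2))
    (heq2 : ∀ x ∈ Set.Ioo (0:ℝ) 1, ∀ t > (0:ℝ),
      deriv (u x) t - a * deriv (fun y => u y t) x + c x t * w x t = 0)
    (hbc1 : ∀ t > (0:ℝ), u 1 t = 0) :
    ∀ x ∈ Set.Icc (0:ℝ) 1, ∀ t : ℝ, 0 < t - (1 - x) / a →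
      u x t = -∫ ξ in (t - (1 - x) / a)..t,
        c (x + a * (t - ξ)) ξ * w (x + a * (t - ξ)) ξ := by
  intro x hx t ht1
  obtain ⟨hx0, hx1⟩ := hx
  set t₁ : ℝ := t - (1 - x) / a with ht₁def
  have hle : t₁ ≤ t := by
    have : 0 ≤ (1 - x) / a := div_nonneg (by linarith) ha.le
    simp [ht₁def]; linarith
  set F : ℝ → ℝ := fun ξ => u (x + a * t + -a * ξ) (0 + 1 * ξ) with hFdef
  set g : ℝ → ℝ := fun ξ => -(c (x + a * (t - ξ)) ξ * w (x + a * (t - ξ)) ξ) with hgdef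
  have hmap1 : Continuous (fun ξ : ℝ => ((x + a * t + -a * ξ, 0 + 1 * ξ) : ℝ × ℝ)) := by
    fun_prop
  have hmap2 : Continuous (fun ξ : ℝ => ((x + a * (t - ξ), ξ) : ℝ × ℝ)) := by fun_prop
  have hcont : ContinuousOn F (Set.Icc t₁ t) :=
    (hu.continuous.comp hmap1).continuousOn
  have hgcont : Continuous g :=
    ((hc.comp hmap2).mul (hw.continuous.comp hmap2)).neg
  have hderiv : ∀ ξ ∈ Set.Ioo t₁ t, HasDerivWithinAt F (g ξ) (Set.Ioi ξ) ξ := by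
    intro ξ hξ
    obtain ⟨hξ1, hξ2⟩ := hξ
    have hX : x + a * t + -a * ξ = x + a * (t - ξ) := by ring
    have hXmem : x + a * (t - ξ) ∈ Set.Ioo (0:ℝ) 1 := by
      constructor
      · nlinarith
      · have h1 : a * (t - ξ) < 1 - x := by
          have : t - ξ < (1 - x) / a := by simp [ht₁def] at hξ1; linarith
          calc a * (t - ξ) < a * ((1 - x) / a) := by
                exact mul_lt_mul_of_pos_left this ha
            _ = 1 - x := by field_simp
        linarith
    have hξpos : 0 < ξ := lt_of_le_of_lt ht1.le hξ1
    have hD := hasDerivAt_line u hu (x + a * t) 0 (-a) 1 ξ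
    have hpde := heq2 _ hXmem ξ hξpos
    have hval : -a * deriv (fun y => u y (0 + 1 * ξ)) (x + a * t + -a * ξ)
        + 1 * deriv (u (x + a * t + -a * ξ)) (0 + 1 * ξ) = g ξ := by
      rw [hX]
      simp only [zero_add, one_mul, hgdef]
      linarith
    rw [hval] at hD
    exact hD.hasDerivWithinAt
  have hint : IntervalIntegrable g MeasureTheory.volume t₁ t :=
    hgcont.intervalIntegrable _ _
  have hftc := intervalIntegral.integral_eq_sub_of_hasDeriv_right_of_le hle hcont hderiv hint
  have hFt : F t = u x t := by
    have h : x + a * t + -a * t = x := by ring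
    simp only [hFdef, h, zero_add, one_mul]
  have hFt₁ : F t₁ = 0 := by
    have h : x + a * t + -a * t₁ = 1 := by
      simp only [ht₁def]
      field_simp
      ring
    simp only [hFdef, h, zero_add, one_mul]
    exact hbc1 t₁ ht1
  have hneg : ∫ ξ in t₁..t, g ξ
      = -∫ ξ in t₁..t, c (x + a * (t - ξ)) ξ * w (x + a * (t - ξ)) ξ := by
    simp [hgdef]
  rw [hFt, hFt₁, sub_zero] at hftc
  rw [← hftc, hneg]

/-- Representation of `w` by integration along characteristics of slope `a`
from the boundary `x = 0`. -/
private lemma w_repr (a : ℝ) (ha : 0 < a)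
    (w u : ℝ → ℝ → ℝ)
    (hw : ContDiff ℝ 1 (fun q : ℝ × ℝ => w q.1 q.2))
    (hu : ContDiff ℝ 1 (fun q : ℝ × ℝ => u q.1 q.2))
    (heq1 : ∀ x ∈ Set.Ioo (0:ℝ) 1, ∀ t > (0:ℝ),
      deriv (w x) t + a * deriv (fun y => w y t) x = u x t) :
    ∀ x ∈ Set.Icc (0:ℝ) 1, ∀ t : ℝ, 0 < t - x / a →
      w x t = w 0 (t - x / a) + ∫ τ in (t - x / a)..t, u (x - a * (t - τ)) τ := by
  intro x hx t ht1
  obtain ⟨hx0, hx1⟩ := hx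
  set t₁ : ℝ := t - x / a with ht₁def
  have hle : t₁ ≤ t := by
    have : 0 ≤ x / a := div_nonneg hx0 ha.le
    simp [ht₁def]; linarith
  set F : ℝ → ℝ := fun τ => w (x - a * t + a * τ) (0 + 1 * τ) with hFdef
  set g : ℝ → ℝ := fun τ => u (x - a * (t - τ)) τ with hgdef
  have hmap1 : Continuous (fun τ : ℝ => ((x - a * t + a * τ, 0 + 1 * τ) : ℝ × ℝ)) := by
    fun_prop
  have hmap2 : Continuous (fun τ : ℝ => ((x - a * (t - τ), τ) : ℝ × ℝ)) := by fun_prop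
  have hcont : ContinuousOn F (Set.Icc t₁ t) :=
    (hw.continuous.comp hmap1).continuousOn
  have hgcont : Continuous g := hu.continuous.comp hmap2
  have hderiv : ∀ τ ∈ Set.Ioo t₁ t, HasDerivWithinAt F (g τ) (Set.Ioi τ) τ := by
    intro τ hτ
    obtain ⟨hτ1, hτ2⟩ := hτ
    have hX : x - a * t + a * τ = x - a * (t - τ) := by ring
    have hXmem : x - a * (t - τ) ∈ Set.Ioo (0:ℝ) 1 := by
      constructor
      · have h1 : a * (t - τ) < x := by
          have : t - τ < x / a := by simp [ht₁def] at hτ1; linarith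
          calc a * (t - τ) < a * (x / a) := mul_lt_mul_of_pos_left this ha
            _ = x := by field_simp
        linarith
      · nlinarith
    have hτpos : 0 < τ := lt_of_le_of_lt ht1.le hτ1
    have hD := hasDerivAt_line w hw (x - a * t) 0 a 1 τ
    have hpde := heq1 _ hXmem τ hτpos
    have hval : a * deriv (fun y => w y (0 + 1 * τ)) (x - a * t + a * τ)
        + 1 * deriv (w (x - a * t + a * τ)) (0 + 1 * τ) = g τ := by
      rw [hX]
      simp only [zero_add, one_mul, hgdef]
      linarith
    rw [hval] at hD
    exact hD.hasDerivWithinAt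
  have hint : IntervalIntegrable g MeasureTheory.volume t₁ t :=
    hgcont.intervalIntegrable _ _
  have hftc := intervalIntegral.integral_eq_sub_of_hasDeriv_right_of_le hle hcont hderiv hint
  have hFt : F t = w x t := by
    have h : x - a * t + a * t = x := by ring
    simp only [hFdef, h, zero_add, one_mul]
  have hFt₁ : F t₁ = w 0 t₁ := by
    have h : x - a * t + a * t₁ = 0 := by
      simp only [ht₁def]
      field_simp
      ring
    simp only [hFdef, h, zero_add, one_mul]
  rw [hFt, hFt₁] at hftc
  simp only [hgdef] at hftc
  linarith


/-- the closed integral equation for `w` from the proof of Theorem 1.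
If `(w,u)` is a `C¹` solution of the first-order system with boundary conditions
`w(0,t) = p·u(0,t)` and `u(1,t) = 0`, then for `x ∈ [0,1]` and `t > 4/a`,
`w(x,t) = −∫_{t−x/a}^{t} ∫_{2τ−t+(x−1)/a}^{τ} (c·w)(x+a(2τ−t−ξ), ξ) dξ dτ
          − p ∫_{t−(x+1)/a}^{t−x/a} (c·w)(a(t−τ)−x, τ) dτ`. -/
theorem closed_integral_equation_for_w
    (a p : ℝ) (ha : 0 < a)
    (c : ℝ → ℝ → ℝ) (hc : Continuous (fun q : ℝ × ℝ => c q.1 q.2))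
    (w u : ℝ → ℝ → ℝ)
    (hw : ContDiff ℝ 1 (fun q : ℝ × ℝ => w q.1 q.2))
    (hu : ContDiff ℝ 1 (fun q : ℝ × ℝ => u q.1 q.2))
    -- ∂ₜw + a∂ₓw = u on (0,1)×(0,∞)
    (heq1 : ∀ x ∈ Set.Ioo (0:ℝ) 1, ∀ t > (0:ℝ),
      deriv (w x) t + a * deriv (fun y => w y t) x = u x t)
    -- ∂ₜu − a∂ₓu + c·w = 0 on (0,1)×(0,∞)
    (heq2 : ∀ x ∈ Set.Ioo (0:ℝ) 1, ∀ t > (0:ℝ),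
      deriv (u x) t - a * deriv (fun y => u y t) x + c x t * w x t = 0)
    -- boundary conditions
    (hbc0 : ∀ t > (0:ℝ), w 0 t = p * u 0 t)
    (hbc1 : ∀ t > (0:ℝ), u 1 t = 0) :
    ∀ x ∈ Set.Icc (0:ℝ) 1, ∀ t > 4 / a,
      w x t =
        -(∫ τ in (t - x / a)..t, ∫ ξ in (2 * τ - t + (x - 1) / a)..τ,
            c (x + a * (2 * τ - t - ξ)) ξ * w (x + a * (2 * τ - t - ξ)) ξ)
        - p * ∫ τ in (t - (x + 1) / a)..(t - x / a),
            c (a * (t - τ) - x) τ * w (a * (t - τ) - x) τ := by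
  intro x hx t ht
  obtain ⟨hx0, hx1⟩ := hx
  have h1a : (0:ℝ) < 1 / a := by positivity
  have hxa : x / a ≤ 1 / a := by gcongr
  have hxa0 : 0 ≤ x / a := div_nonneg hx0 ha.le
  have h4a : 4 / a = 4 * (1 / a) := by ring
  have ht' : 4 * (1 / a) < t := by rw [← h4a]; exact ht
  -- time positivity facts
  have hs : 0 < t - x / a := by linarith
  have hle : t - x / a ≤ t := by linarith
  -- step 1: representation of w along the characteristic of slope a
  have hB := w_repr a ha w u hw hu heq1 x ⟨hx0, hx1⟩ t hs
  -- step 2: boundary value via hbc0 and u_repr at x = 0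
  have hs1 : 0 < (t - x / a) - (1 - 0) / a := by
    rw [show ((1:ℝ) - 0) / a = 1 / a by norm_num]
    linarith
  have hA0 := u_repr a ha c w u hc hw hu heq2 hbc1 0 ⟨le_rfl, zero_le_one⟩
      (t - x / a) hs1
  have hbnd : (t - x / a) - (1 - 0) / a = t - (x + 1) / a := by field_simp; ring
  have hintg : ∀ τ : ℝ, (0:ℝ) + a * ((t - x / a) - τ) = a * (t - τ) - x := by
    intro τ; field_simp; ring
  rw [hbnd] at hA0
  simp only [hintg] at hA0
  have hbc := hbc0 (t - x / a) hs
  -- step 3: the inner integral via u_repr along the characteristic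
  have hinner : Set.EqOn (fun τ => u (x - a * (t - τ)) τ)
      (fun τ => -(∫ ξ in (2 * τ - t + (x - 1) / a)..τ,
        c (x + a * (2 * τ - t - ξ)) ξ * w (x + a * (2 * τ - t - ξ)) ξ))
      (Set.uIcc (t - x / a) t) := by
    intro τ hτ
    rw [Set.uIcc_of_le hle] at hτ
    obtain ⟨hτ1, hτ2⟩ := hτ
    have hXmem : x - a * (t - τ) ∈ Set.Icc (0:ℝ) 1 := by
      constructor
      · have h1 : t - τ ≤ x / a := by linarith
        have h2 : a * (t - τ) ≤ a * (x / a) := mul_le_mul_of_nonneg_left h1 ha.le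
        have h3 : a * (x / a) = x := by field_simp
        linarith
      · nlinarith
    have hexp : τ - (1 - (x - a * (t - τ))) / a = 2 * τ - t + (x - 1) / a := by
      field_simp; ring
    have hxa1 : (x - 1) / a = x / a - 1 / a := by ring
    have hpos : 0 < τ - (1 - (x - a * (t - τ))) / a := by rw [hexp]; linarith
    have hAτ := u_repr a ha c w u hc hw hu heq2 hbc1 _ hXmem τ hpos
    rw [hexp] at hAτ
    have h6 : ∀ ξ : ℝ, x - a * (t - τ) + a * (τ - ξ) = x + a * (2 * τ - t - ξ) :=
      fun ξ => by ring
    simp only [h6] at hAτ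
    exact hAτ
  have hD : ∫ τ in (t - x / a)..t, u (x - a * (t - τ)) τ
      = -(∫ τ in (t - x / a)..t, ∫ ξ in (2 * τ - t + (x - 1) / a)..τ,
          c (x + a * (2 * τ - t - ξ)) ξ * w (x + a * (2 * τ - t - ξ)) ξ) := by
    rw [intervalIntegral.integral_congr hinner, intervalIntegral.integral_neg]
  rw [hB, hbc, hA0, hD]
  ring
end

section
/- Let h > 0 and C ≥ 0, and let W : [0,∞) → [0,∞) be a continuous function such that W(t) ≤ C for all t ∈ [0,h]. For every γ > 0 there exist δ₀ > 0 and M > 0 (depending only on γ and h) such that: if δ ∈ [0,δ₀] and W satisfies W(t) ≤ δ ∫_{t−h}^{t} W(τ) dτ for all t > h, then W(t) ≤ M C e^{−γ t} for all t ≥ 0. -/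
/-- the Gronwall-type decay lemma underlying Theorem 1.
Let `h > 0`. For every `γ > 0` there exist `δ₀ > 0` and `M > 0`, depending only on `γ`
and `h`, such that: if `C ≥ 0` and `W : [0,∞) → [0,∞)` is continuous with `W ≤ C` on
`[0,h]`, and if `0 ≤ δ ≤ δ₀` and `W(t) ≤ δ ∫_{t−h}^{t} W(τ) dτ` for all `t > h`,
then `W(t) ≤ M C e^{−γ t}` for all `t ≥ 0`. -/
theorem memory_integral_inequality_exponential_decay
    (h : ℝ) (hh : 0 < h) :
    ∀ γ > (0:ℝ), ∃ δ₀ > (0:ℝ), ∃ M > (0:ℝ),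
      ∀ C : ℝ, 0 ≤ C →
      ∀ W : ℝ → ℝ,
        ContinuousOn W (Set.Ici 0) →
        (∀ t ≥ (0:ℝ), 0 ≤ W t) →
        (∀ t ∈ Set.Icc (0:ℝ) h, W t ≤ C) →
      ∀ δ : ℝ, 0 ≤ δ → δ ≤ δ₀ →
        (∀ t > h, W t ≤ δ * ∫ τ in (t - h)..t, W τ) →
      ∀ t ≥ (0:ℝ), W t ≤ M * C * Real.exp (-γ * t) := by
  intro γ hγ
  set q : ℝ := Real.exp (-(γ * h)) with hq_def
  have hq0 : 0 < q := Real.exp_pos _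
  have hq1 : q < 1 := by
    rw [hq_def]
    exact Real.exp_lt_one_iff.mpr (by nlinarith)
  refine ⟨q / (2 * h), by positivity, Real.exp (γ * h), Real.exp_pos _, ?_⟩
  intro C hC W hWc hWnn hWinit δ hδ0 hδ hWineq
  have hδh : δ * h ≤ q / 2 := by
    have := mul_le_mul_of_nonneg_right hδ (le_of_lt hh)
    calc δ * h ≤ q / (2 * h) * h := this
      _ = q / 2 := by field_simp
  -- main induction
  have main : ∀ n : ℕ, ∀ t ∈ Set.Icc ((n : ℝ) * h) (((n : ℝ) + 1) * h), W t ≤ C * q ^ n := by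
    intro n
    induction n with
    | zero =>
      intro t ht
      simpa using hWinit t (by simpa using ht)
    | succ n ih =>
      set a : ℝ := ((n : ℝ) + 1) * h with ha_def
      set b : ℝ := ((n : ℝ) + 2) * h with hb_def
      have hna : (n : ℝ) * h ≤ a := by nlinarith [Nat.cast_nonneg (α := ℝ) n]
      have hha : h ≤ a := by nlinarith [Nat.cast_nonneg (α := ℝ) n]
      have hab : a < b := by nlinarith
      have h0a : (0:ℝ) ≤ (n : ℝ) * h := by positivity
      have hsub : Set.Icc a b ⊆ Set.Ici (0:ℝ) := fun x hx => le_trans (by linarith) hx.1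
      obtain ⟨ts, hts_mem, hts_max⟩ :=
        (isCompact_Icc (a := a) (b := b)).exists_isMaxOn ⟨a, le_refl a, le_of_lt hab⟩
          (hWc.mono hsub)
      have hts_max' : ∀ s ∈ Set.Icc a b, W s ≤ W ts := fun s hs => hts_max hs
      -- pointwise bound on [n h, b]
      have hbound : ∀ τ ∈ Set.Icc ((n:ℝ) * h) b, W τ ≤ max (C * q ^ n) (W ts) := by
        intro τ hτ
        rcases le_or_gt τ a with hτa | hτa
        · exact le_max_of_le_left (ih τ ⟨hτ.1, hτa⟩)
        · exact le_max_of_le_right (hts_max' τ ⟨le_of_lt hτa, hτ.2⟩)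
      -- integral bound
      have hint : ∀ t, a ≤ t → t ≤ b →
          (∫ τ in (t - h)..t, W τ) ≤ h * max (C * q ^ n) (W ts) := by
        intro t hat htb
        have h1 : (n:ℝ) * h ≤ t - h := by
          have : ((n:ℝ) + 1) * h ≤ t := hat
          linarith [this]
        have hIsub : Set.Icc (t - h) t ⊆ Set.Icc ((n:ℝ) * h) b :=
          Set.Icc_subset_Icc h1 htb
        have hIsub' : Set.Icc (t - h) t ⊆ Set.Ici (0:ℝ) := fun x hx =>
          le_trans (le_trans h0a h1) hx.1
        have hWint : IntervalIntegrable W MeasureTheory.volume (t - h) t := by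
          apply ContinuousOn.intervalIntegrable
          rw [Set.uIcc_of_le (by linarith)]
          exact hWc.mono hIsub'
        have hcint : IntervalIntegrable (fun _ : ℝ => max (C * q ^ n) (W ts))
            MeasureTheory.volume (t - h) t := intervalIntegrable_const
        have := intervalIntegral.integral_mono_on (by linarith : t - h ≤ t) hWint hcint
          (fun τ hτ => hbound τ (hIsub hτ))
        refine this.trans (le_of_eq ?_)
        rw [intervalIntegral.integral_const, smul_eq_mul]; ring
      have hCqn : (0:ℝ) ≤ C * q ^ n := by positivity
      -- the maximum is at most C q^n
      have hK : W ts ≤ C * q ^ n := by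
        rcases eq_or_lt_of_le hts_mem.1 with heq | hlt
        · rw [← heq]; exact ih a ⟨hna, le_refl a⟩
        · have hth : ts > h := lt_of_le_of_lt hha hlt
          have h1 : W ts ≤ δ * (h * max (C * q ^ n) (W ts)) := by
            have := hWineq ts hth
            have h2 := hint ts hts_mem.1 hts_mem.2
            have hmax_nn : (0:ℝ) ≤ max (C * q ^ n) (W ts) := le_max_of_le_left hCqn
            nlinarith [this, h2]
          rcases le_or_gt (W ts) (C * q ^ n) with h' | h'
          · exact h'
          · exfalso
            have hmx : max (C * q ^ n) (W ts) = W ts := max_eq_right (le_of_lt h')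
            rw [hmx] at h1
            have hWts_nn : 0 ≤ W ts := hWnn ts (hsub hts_mem)
            nlinarith [h1, hδh, hq1]
      have hmx : max (C * q ^ n) (W ts) = C * q ^ n := max_eq_left hK
      -- on the open-closed interval
      have hIoc : ∀ t ∈ Set.Ioc a b, W t ≤ C * q ^ (n + 1) := by
        intro t ht
        have hth : t > h := lt_of_le_of_lt hha ht.1
        have h1 := hWineq t hth
        have h2 := hint t (le_of_lt ht.1) ht.2
        rw [hmx] at h2
        have : W t ≤ δ * (h * (C * q ^ n)) :=
          h1.trans (mul_le_mul_of_nonneg_left h2 hδ0)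
        have hq2 : δ * (h * (C * q ^ n)) ≤ q * (C * q ^ n) := by
          nlinarith [hδh, hCqn, hq0]
        calc W t ≤ q * (C * q ^ n) := this.trans hq2
          _ = C * q ^ (n + 1) := by ring
      -- endpoint by continuity
      have hA : W a ≤ C * q ^ (n + 1) := by
        have hcw : ContinuousWithinAt W (Set.Ici 0) a := hWc a (le_trans (by linarith) hha)
        have hmono : nhdsWithin a (Set.Ioi a) ≤ nhdsWithin a (Set.Ici 0) :=
          nhdsWithin_mono a (fun x hx => le_trans (le_trans (by linarith : (0:ℝ) ≤ a) (le_refl a)) (le_of_lt hx))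
        have htend : Filter.Tendsto W (nhdsWithin a (Set.Ioi a)) (nhds (W a)) :=
          hcw.tendsto.comp (by exact hmono) |>.congr (fun _ => rfl)
        refine le_of_tendsto htend ?_
        filter_upwards [Ioc_mem_nhdsGT_of_mem (Set.left_mem_Ico.mpr hab)] with t ht
        exact hIoc t ht
      intro t ht
      have ht' : t ∈ Set.Icc a b := by
        constructor
        · have := ht.1; push_cast at this ⊢; linarith
        · have := ht.2; push_cast at this ⊢; linarith
      rcases eq_or_lt_of_le ht'.1 with heq | hlt
      · rw [← heq]; exact hA
      · exact hIoc t ⟨hlt, ht'.2⟩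
  -- conclude
  intro t ht
  set n : ℕ := ⌊t / h⌋₊ with hn_def
  have hn1 : (n : ℝ) * h ≤ t := by
    have := Nat.floor_le (div_nonneg ht (le_of_lt hh))
    calc (n:ℝ) * h ≤ t / h * h := by nlinarith
      _ = t := by field_simp
  have hn2 : t ≤ ((n : ℝ) + 1) * h := by
    have h1 : t / h < (n : ℝ) + 1 := by exact_mod_cast Nat.lt_floor_add_one (t / h)
    have := (div_lt_iff₀ hh).mp h1
    linarith
  have hW := main n t ⟨hn1, hn2⟩
  have hq_pow : q ^ n = Real.exp (-(γ * h) * n) := by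
    rw [hq_def, ← Real.exp_nat_mul]; ring_nf
  calc W t ≤ C * q ^ n := hW
    _ ≤ Real.exp (γ * h) * C * Real.exp (-γ * t) := by
        rw [hq_pow]
        have key : Real.exp (-(γ * h) * n) ≤ Real.exp (γ * h) * Real.exp (-γ * t) := by
          rw [← Real.exp_add, Real.exp_le_exp]
          nlinarith [hn2, hγ]
        nlinarith [key, Real.exp_pos (-(γ*h) * (n:ℝ)), hC]
end

section
/- Let a > 0 and p ∈ ℝ, and let w, u : [0,1]×[0,∞) → ℝ be continuously differentiable functions satisfying the decoupled transport system ∂_t w + a ∂_x w = 0 and ∂_t u − a ∂_x u = 0 on (0,1)×(0,∞), together with the boundary conditions w(0,t) = p·u(0,t) and u(1,t) = 0 for all t > 0. Then u(x,t) = 0 for every x ∈ [0,1] and every t > (1−x)/a, and w(x,t) = 0 for every x ∈ [0,1] and every t > (1+x)/a. In particular, both w and u vanish identically for t > 2/a. -/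
open Set

lemma constOpenDeriv (φ : ℝ → ℝ) (hc : Continuous φ)
    (hd : ∀ s ∈ Set.Ioo (0:ℝ) 1, HasDerivAt φ 0 s) : φ 1 = φ 0 := by
  have key : ∀ s ∈ Set.Ioo (0:ℝ) 1, φ s = φ (1/2) := by
    intro s hs
    rcases le_total s (1/2) with h | h
    · exact (constant_of_has_deriv_right_zero (f := φ) (a := s) (b := 1/2)
        hc.continuousOn
        (fun x hx => (hd x ⟨lt_of_lt_of_le hs.1 hx.1, lt_trans hx.2 (by norm_num)⟩).hasDerivWithinAt)
        (1/2) ⟨h, le_rfl⟩).symm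
    · exact constant_of_has_deriv_right_zero (f := φ) (a := 1/2) (b := s)
        hc.continuousOn
        (fun x hx => (hd x ⟨lt_of_lt_of_le (by norm_num) hx.1, lt_trans hx.2 hs.2⟩).hasDerivWithinAt)
        s ⟨h, le_rfl⟩
  have h0 : φ 0 = φ (1/2) := by
    refine tendsto_nhds_unique (l := nhdsWithin (0:ℝ) (Set.Ioi 0))
      hc.continuousAt.continuousWithinAt ?_
    refine Filter.Tendsto.congr' ?_ tendsto_const_nhds
    filter_upwards [Ioo_mem_nhdsGT_of_mem (by norm_num : (0:ℝ) ∈ Ico (0:ℝ) 1)] with x hx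
    exact (key x hx).symm
  have h1 : φ 1 = φ (1/2) := by
    refine tendsto_nhds_unique (l := nhdsWithin (1:ℝ) (Set.Iio 1))
      hc.continuousAt.continuousWithinAt ?_
    refine Filter.Tendsto.congr' ?_ tendsto_const_nhds
    filter_upwards [Ioo_mem_nhdsLT_of_mem (by norm_num : (1:ℝ) ∈ Ioc (0:ℝ) 1)] with x hx
    exact (key x hx).symm
  rw [h0, h1]

lemma segment_const (F : ℝ × ℝ → ℝ) (hF : ContDiff ℝ 1 F) (q v : ℝ × ℝ)
    (h : ∀ s ∈ Set.Ioo (0:ℝ) 1, fderiv ℝ F (q + s • v) v = 0) :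
    F (q + v) = F q := by
  have hγ : ∀ s : ℝ, HasDerivAt (fun s : ℝ => q + s • v) v s := fun s => by
    simpa using ((hasDerivAt_id s).smul_const v).const_add q
  have hd : ∀ s ∈ Set.Ioo (0:ℝ) 1, HasDerivAt (fun s => F (q + s • v)) 0 s := by
    intro s hs
    have := (hF.differentiable one_ne_zero (q + s • v)).hasFDerivAt.comp_hasDerivAt s (hγ s)
    simpa [Function.comp_def, h s hs] using this
  have hγc : Continuous (fun s : ℝ => q + s • v) := by fun_prop
  have hc : Continuous (fun s : ℝ => F (q + s • v)) := hF.continuous.comp hγc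
  have := constOpenDeriv _ hc hd
  simpa using this

lemma pderiv_snd (F : ℝ × ℝ → ℝ) (hF : Differentiable ℝ F) (x t : ℝ) :
    deriv (fun s => F (x, s)) t = fderiv ℝ F (x, t) (0, 1) := by
  have : HasDerivAt (fun s => F (x, s)) (fderiv ℝ F (x, t) (0, 1)) t := by
    have := (hF (x, t)).hasFDerivAt.comp_hasDerivAt t
      ((hasDerivAt_const t x).prodMk (hasDerivAt_id t))
    simpa [Function.comp_def] using this
  exact this.deriv

lemma pderiv_fst (F : ℝ × ℝ → ℝ) (hF : Differentiable ℝ F) (x t : ℝ) :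
    deriv (fun y => F (y, t)) x = fderiv ℝ F (x, t) (1, 0) := by
  have : HasDerivAt (fun y => F (y, t)) (fderiv ℝ F (x, t) (1, 0)) x := by
    have := (hF (x, t)).hasFDerivAt.comp_hasDerivAt x
      ((hasDerivAt_id x).prodMk (hasDerivAt_const x t))
    simpa [Function.comp_def] using this
  exact this.deriv

lemma fderiv_pair (L : ℝ × ℝ →L[ℝ] ℝ) (c d : ℝ) :
    L (c, d) = c * L (1, 0) + d * L (0, 1) := by
  have h : (c, d) = c • ((1:ℝ), (0:ℝ)) + d • ((0:ℝ), (1:ℝ)) := by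
    simp [Prod.ext_iff]
  rw [h, map_add, map_smul, map_smul]; simp [smul_eq_mul]


/-- superstability of the decoupled system (11) of the paper.
If `(w,u)` is a `C¹` solution of the decoupled transport system
`∂ₜw + a∂ₓw = 0`, `∂ₜu − a∂ₓu = 0` on `(0,1)×(0,∞)` with boundary conditions
`w(0,t) = p·u(0,t)` and `u(1,t) = 0`, then `u(x,t) = 0` for `t > (1−x)/a`,
`w(x,t) = 0` for `t > (1+x)/a`; in particular both vanish for `t > 2/a`. -/
theorem decoupled_transport_finite_time_extinction
    (a p : ℝ) (ha : 0 < a)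
    (w u : ℝ → ℝ → ℝ)
    (hw : ContDiff ℝ 1 (fun q : ℝ × ℝ => w q.1 q.2))
    (hu : ContDiff ℝ 1 (fun q : ℝ × ℝ => u q.1 q.2))
    -- ∂ₜw + a∂ₓw = 0 on (0,1)×(0,∞)
    (heq1 : ∀ x ∈ Set.Ioo (0:ℝ) 1, ∀ t > (0:ℝ),
      deriv (w x) t + a * deriv (fun y => w y t) x = 0)
    -- ∂ₜu − a∂ₓu = 0 on (0,1)×(0,∞)
    (heq2 : ∀ x ∈ Set.Ioo (0:ℝ) 1, ∀ t > (0:ℝ),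
      deriv (u x) t - a * deriv (fun y => u y t) x = 0)
    -- boundary conditions
    (hbc0 : ∀ t > (0:ℝ), w 0 t = p * u 0 t)
    (hbc1 : ∀ t > (0:ℝ), u 1 t = 0) :
    (∀ x ∈ Set.Icc (0:ℝ) 1, ∀ t : ℝ, t > (1 - x) / a → u x t = 0) ∧
    (∀ x ∈ Set.Icc (0:ℝ) 1, ∀ t : ℝ, t > (1 + x) / a → w x t = 0) ∧
    (∀ x ∈ Set.Icc (0:ℝ) 1, ∀ t : ℝ, t > 2 / a → w x t = 0 ∧ u x t = 0) := by
  set F : ℝ × ℝ → ℝ := fun q => u q.1 q.2 with hF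
  set G : ℝ × ℝ → ℝ := fun q => w q.1 q.2 with hG
  have hFd : Differentiable ℝ F := hu.differentiable one_ne_zero
  have hGd : Differentiable ℝ G := hw.differentiable one_ne_zero
  -- part 1 : u
  have hupart : ∀ x ∈ Set.Icc (0:ℝ) 1, ∀ t : ℝ, t > (1 - x) / a → u x t = 0 := by
    intro x hx t ht
    have ht0 : 0 < t - (1 - x) / a := by linarith
    have hkey : F ((1, t - (1 - x) / a) + (x - 1, (1 - x) / a)) =
        F (1, t - (1 - x) / a) := by
      apply segment_const F hu
      intro s hs
      rcases eq_or_lt_of_le hx.2 with hx1 | hx1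
      · have : (x - 1, (1 - x) / a) = (0 : ℝ × ℝ) := by
          simp [← hx1]
        rw [this]; exact ContinuousLinearMap.map_zero _
      · set x' : ℝ := 1 + s * (x - 1) with hx'
        set t' : ℝ := t - (1 - x) / a + s * ((1 - x) / a) with ht'
        have hq : (1, t - (1 - x) / a) + s • ((x - 1, (1 - x) / a) : ℝ × ℝ) = (x', t') := by
          simp [Prod.ext_iff, hx', ht', mul_comm]
        rw [hq]
        have hx'mem : x' ∈ Set.Ioo (0:ℝ) 1 := by
          constructor
          · nlinarith [hs.1, hs.2, hx.1]
          · nlinarith [hs.1, hs.2]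
        have ht'pos : 0 < t' := by
          have h1 : (1 - x) / a > 0 := div_pos (by linarith) ha
          rw [ht']
          nlinarith [mul_pos hs.1 h1]
        have heq := heq2 x' hx'mem t' ht'pos
        have hDt : deriv (u x') t' = fderiv ℝ F (x', t') (0, 1) := pderiv_snd F hFd x' t'
        have hDx : deriv (fun y => u y t') x' = fderiv ℝ F (x', t') (1, 0) :=
          pderiv_fst F hFd x' t'
        rw [hDt, hDx] at heq
        rw [fderiv_pair]
        have hane : a ≠ 0 := ne_of_gt ha
        field_simp at heq ⊢
        nlinarith [heq]
    have h1 : F (1, t - (1 - x) / a) = 0 := hbc1 _ ht0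
    have h2 : ((1:ℝ), t - (1 - x) / a) + (x - 1, (1 - x) / a) = (x, t) := by
      simp [Prod.ext_iff]
    rw [h2, h1] at hkey
    exact hkey
  -- part 2 : w
  have hwpart : ∀ x ∈ Set.Icc (0:ℝ) 1, ∀ t : ℝ, t > (1 + x) / a → w x t = 0 := by
    intro x hx t ht
    have hxa : x / a ≥ 0 := div_nonneg hx.1 (le_of_lt ha)
    have h1a : (0:ℝ) < 1 / a := div_pos one_pos ha
    have htx : t - x / a > 1 / a := by
      have : (1 + x) / a = 1 / a + x / a := by ring
      linarith [this ▸ ht]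
    have ht0 : 0 < t - x / a := by linarith
    have hkey : G ((0, t - x / a) + (x, x / a)) = G (0, t - x / a) := by
      apply segment_const G hw
      intro s hs
      rcases eq_or_lt_of_le hx.1 with hx0 | hx0
      · have : ((x : ℝ), x / a) = (0 : ℝ × ℝ) := by simp [← hx0]
        rw [this]; exact ContinuousLinearMap.map_zero _
      · set x' : ℝ := 0 + s * x with hx'
        set t' : ℝ := t - x / a + s * (x / a) with ht'
        have hq : ((0:ℝ), t - x / a) + s • ((x, x / a) : ℝ × ℝ) = (x', t') := by
          simp [Prod.ext_iff, hx', ht', mul_comm]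
        rw [hq]
        have hx'mem : x' ∈ Set.Ioo (0:ℝ) 1 := by
          constructor
          · simp only [hx', zero_add]; exact mul_pos hs.1 hx0
          · simp only [hx', zero_add]
            nlinarith [hs.2, hx.2, hs.1]
        have ht'pos : 0 < t' := by
          rw [ht']
          nlinarith [mul_pos hs.1 (div_pos hx0 ha)]
        have heq := heq1 x' hx'mem t' ht'pos
        have hDt : deriv (w x') t' = fderiv ℝ G (x', t') (0, 1) := pderiv_snd G hGd x' t'
        have hDx : deriv (fun y => w y t') x' = fderiv ℝ G (x', t') (1, 0) :=
          pderiv_fst G hGd x' t'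
        rw [hDt, hDx] at heq
        rw [fderiv_pair]
        have hane : a ≠ 0 := ne_of_gt ha
        field_simp at heq ⊢
        nlinarith [heq]
    have h1 : G (0, t - x / a) = 0 := by
      have hu0 : u 0 (t - x / a) = 0 := by
        apply hupart 0 (by norm_num) _
        simpa using htx
      have := hbc0 (t - x / a) ht0
      simp only [hG]
      rw [this, hu0, mul_zero]
    have h2 : ((0:ℝ), t - x / a) + (x, x / a) = (x, t) := by
      simp [Prod.ext_iff]
    rw [h2, h1] at hkey
    exact hkey
  refine ⟨hupart, hwpart, ?_⟩
  intro x hx t ht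
  constructor
  · apply hwpart x hx t
    have h1 : (1 + x) / a ≤ 2 / a := (div_le_div_iff_of_pos_right ha).mpr (by linarith [hx.2])
    linarith
  · apply hupart x hx t
    have h1 : (1 - x) / a ≤ 2 / a := (div_le_div_iff_of_pos_right ha).mpr (by linarith [hx.1])
    linarith
end
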